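/- arXiv:1007.5458 — 9 statements merged into one kernel-verified Lean document; each statement's English description precedes it below -/
import Mathlib

section
/- Let L be an n-globular K-vector space with linear identity maps and set V_i = ker(s : L_i → L_{i-1}) (with V_0 = L_0). For each m ∈ {0,…,n}, the linear map α_m : V_0 ⊕ ⋯ ⊕ V_m → L_m defined by α_m(v_0,…,v_m) = Σ_{i=0}^{m} 1^{m-i}_{v_i} (where 1^k denotes the k-fold iterate of the identity map and 1^0 = id) is a linear isomorphism; its inverse β_m is given component by component (computed from left to right) by β_m(a) = (s^m(a), …, s^{m-i}(a − Σ_{j=0}^{i-1} 1^{m-j}_{p_j β_m(a)}), …, a − Σ_{j=0}^{m-1} 1^{m-j}_{p_j β_m(a)}), where p_j denotes the projection onto V_j. -/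
/- STATEMENT 1: in an n-globular vector space with identities, L_m ≅ V_0 ⊕ ⋯ ⊕ V_m
(V_i = ker s_i) via α_m(v_0,…,v_m) = Σ 1^{m-i}_{v_i}, with explicit inverse β_m. -/

structure LinGlob (K : Type) [Field K] (n : ℕ) : Type 1 where
  L : ℕ → Type
  acg : ∀ m, AddCommGroup (L m)
  mod : ∀ m, Module K (L m)
  trunc : ∀ m, n < m → Subsingleton (L m)
  s : ∀ m, L (m + 1) →ₗ[K] L m
  t : ∀ m, L (m + 1) →ₗ[K] L m
  glob_s : ∀ m (a : L (m + 2)), s m (s (m + 1) a) = s m (t (m + 1) a)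
  glob_t : ∀ m (a : L (m + 2)), t m (s (m + 1) a) = t m (t (m + 1) a)

attribute [instance] LinGlob.acg LinGlob.mod

namespace LinGlob

variable {K : Type} [Field K] {n : ℕ}

/-- Cast between levels. -/
def castL (G : LinGlob K n) {a b : ℕ} (h : a = b) (x : G.L a) : G.L b := h ▸ x

/-- One application of the source map (junk identity at level 0). -/
def sStep (G : LinGlob K n) : ∀ m, G.L m → G.L (m - 1)
  | 0, a => a
  | (m + 1), a => G.s m a

/-- Iterated source map `s^k : L m → L (m-k)`. -/
def sFrom (G : LinGlob K n) (m : ℕ) : ∀ k, G.L m → G.L (m - k)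
  | 0, a => a
  | (k + 1), a => G.sStep (m - k) (G.sFrom m k a)

/-- Iterated source map `s^{m-j} : L m → L j` for `j ≤ m`. -/
def sDownTo (G : LinGlob K n) (m j : ℕ) (h : j ≤ m) (a : G.L m) : G.L j :=
  G.castL (by omega : m - (m - j) = j) (G.sFrom m (m - j) a)

end LinGlob

/-- An n-globular vector space with linear identity maps. -/
structure LinGlobId (K : Type) [Field K] (n : ℕ) extends LinGlob K n where
  one : ∀ m, L m →ₗ[K] L (m + 1)
  one_s : ∀ m, m < n → ∀ a, s m (one m a) = a
  one_t : ∀ m, m < n → ∀ a, t m (one m a) = a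

namespace LinGlobId

variable {K : Type} [Field K] {n : ℕ}

/-- Iterated identity map `1^k : L j → L (j+k)`. -/
def oneUp (G : LinGlobId K n) : ∀ (j k : ℕ), G.L j → G.L (j + k)
  | _, 0, a => a
  | j, (k + 1), a => G.one (j + k) (G.oneUp j k a)

/-- Iterated identity map `1^{m-j} : L j → L m` for `j ≤ m`. -/
def oneUpTo (G : LinGlobId K n) (j m : ℕ) (h : j ≤ m) (a : G.L j) : G.L m :=
  G.toLinGlob.castL (by omega : j + (m - j) = m) (G.oneUp j (m - j) a)

/-- The map `α_m : V_0 ⊕ ⋯ ⊕ V_m → L_m`, `α_m (v_0,…,v_m) = Σᵢ 1^{m-i}_{v_i}`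
(defined here on the full product `Π i, L i`; it is restricted to the subspace
`Π i, V i` in the statement below). -/
def alphaFun (G : LinGlobId K n) (m : ℕ) (v : ∀ i : Fin (m + 1), G.L i) : G.L m :=
  ∑ i : Fin (m + 1), G.oneUpTo i m (Fin.is_le i) (v i)

/-- The partial sums `c_i = Σ_{j<i} 1^{m-j}_{p_j β_m(a)}` entering the recursive
definition of `β_m` ("computed from left to right"). -/
def betaC (G : LinGlobId K n) (m : ℕ) (a : G.L m) : ℕ → G.L m
  | 0 => 0
  | (i + 1) =>
      G.betaC m a i +
        (if h : i ≤ m then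
          G.oneUpTo i m h (G.toLinGlob.sDownTo m i h (a - G.betaC m a i))
        else 0)

/-- The map `β_m : L_m → V_0 ⊕ ⋯ ⊕ V_m`,
`β_m(a)_i = s^{m-i}(a − Σ_{j=0}^{i-1} 1^{m-j}_{p_j β_m(a)})`. -/
def betaFun (G : LinGlobId K n) (m : ℕ) (a : G.L m) (i : Fin (m + 1)) : G.L i :=
  G.toLinGlob.sDownTo m i (Fin.is_le i) (a - G.betaC m a i)

end LinGlobId

namespace LinGlob
variable {K : Type} [Field K] {n : ℕ} (G : LinGlob K n)

@[simp] theorem castL_rfl {a : ℕ} (x : G.L a) : G.castL rfl x = x := rfl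

theorem castL_heq {a b : ℕ} (h : a = b) (x : G.L a) : HEq (G.castL h x) x := by
  subst h; rfl

theorem castL_eq_castL {a b c : ℕ} (h1 : a = c) (h2 : b = c) {x : G.L a} {y : G.L b}
    (he : HEq x y) : G.castL h1 x = G.castL h2 y := by
  subst h1; subst h2; exact congrArg _ (eq_of_heq he)

theorem eq_castL_of_heq {a b : ℕ} (h : a = b) {x : G.L a} {y : G.L b}
    (he : HEq x y) : y = G.castL h x := by
  subst h; exact (eq_of_heq he).symm

@[simp] theorem castL_castL {a b c : ℕ} (h1 : a = b) (h2 : b = c) (x : G.L a) :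
    G.castL h2 (G.castL h1 x) = G.castL (h1.trans h2) x := by
  subst h1; subst h2; rfl

theorem castL_add {a b : ℕ} (h : a = b) (x y : G.L a) :
    G.castL h (x + y) = G.castL h x + G.castL h y := by subst h; rfl

theorem castL_sub {a b : ℕ} (h : a = b) (x y : G.L a) :
    G.castL h (x - y) = G.castL h x - G.castL h y := by subst h; rfl

theorem castL_smul {a b : ℕ} (h : a = b) (c : K) (x : G.L a) :
    G.castL h (c • x) = c • G.castL h x := by subst h; rfl

@[simp] theorem castL_zero {a b : ℕ} (h : a = b) :
    G.castL h (0 : G.L a) = 0 := by subst h; rfl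

theorem castL_self {a : ℕ} (h : a = a) (x : G.L a) : G.castL h x = x := rfl

theorem sStep_congr {i i' : ℕ} (h : i = i') {x : G.L i} {x' : G.L i'} (hx : HEq x x') :
    HEq (G.sStep i x) (G.sStep i' x') := by subst h; rw [eq_of_heq hx]

theorem s_castL {a b : ℕ} (h : a = b) {h2 : a + 1 = b + 1} (x : G.L (a + 1)) :
    G.s b (G.castL h2 x) = G.castL h (G.s a x) := by subst h; rfl

/-- clean iterated source: `s^k : L (j+k) → L j`, peeling from the top. -/
def sIter : ∀ (k j : ℕ), G.L (j + k) → G.L j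
  | 0, _, a => a
  | (k + 1), j, a => sIter k j (G.s (j + k) a)

theorem sIter_add (k j : ℕ) (x y : G.L (j + k)) :
    G.sIter k j (x + y) = G.sIter k j x + G.sIter k j y := by
  induction k with
  | zero => rfl
  | succ k ih => simp only [sIter, map_add, ih]

theorem sIter_sub (k j : ℕ) (x y : G.L (j + k)) :
    G.sIter k j (x - y) = G.sIter k j x - G.sIter k j y := by
  induction k with
  | zero => rfl
  | succ k ih => simp only [sIter, map_sub, ih]

@[simp] theorem sIter_zero (k j : ℕ) : G.sIter k j (0 : G.L (j + k)) = 0 := by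
  induction k with
  | zero => rfl
  | succ k ih => simp only [sIter, map_zero, ih]

theorem sFrom_heq {m : ℕ} {k k' : ℕ} (h : k = k') (a : G.L m) :
    HEq (G.sFrom m k a) (G.sFrom m k' a) := by subst h; rfl

theorem sFrom_top (m k : ℕ) (a : G.L (m + 1)) :
    HEq (G.sFrom (m + 1) (k + 1) a) (G.sFrom m k (G.s m a)) := by
  induction k with
  | zero => rfl
  | succ k ih =>
    show HEq (G.sStep (m + 1 - (k + 1)) (G.sFrom (m + 1) (k + 1) a))
      (G.sStep (m - k) (G.sFrom m k (G.s m a)))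
    exact G.sStep_congr (by omega) ih

/-- `sDownTo` in terms of `sIter`. -/
theorem sDownTo_eq {m i k : ℕ} (h : i + k = m) (a : G.L m) :
    G.sDownTo m i (by omega) a = G.sIter k i (G.castL h.symm a) := by
  induction k generalizing m a with
  | zero =>
    have hi : i = m := by omega
    subst hi
    show G.castL (by omega : i - (i - i) = i) (G.sFrom i (i - i) a) = _
    exact G.castL_eq_castL _ _ (G.sFrom_heq (show i - i = 0 by omega) a)
  | succ k ih =>
    subst h
    show G.castL _ (G.sFrom (i + k + 1) (i + k + 1 - i) a) = _
    have e1 : HEq (G.sFrom (i + k + 1) (i + k + 1 - i) a)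
        (G.sFrom (i + k) (i + k - i) (G.s (i + k) a)) :=
      ((G.sFrom_heq (by omega) a).trans (G.sFrom_top (i + k) k a)).trans
        (G.sFrom_heq (by omega) (G.s (i + k) a)).symm
    have e2 : G.sDownTo (i + k) i (by omega) (G.s (i + k) a) =
        G.sIter k i (G.castL rfl (G.s (i + k) a)) := ih rfl (G.s (i + k) a)
    calc G.castL _ (G.sFrom (i + k + 1) (i + k + 1 - i) a)
        = G.castL (by omega) (G.sFrom (i + k) (i + k - i) (G.s (i + k) a)) :=
          G.castL_eq_castL _ _ e1
      _ = G.sIter k i (G.s (i + k) a) := by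
          rw [show G.castL (by omega : i + k - (i + k - i) = i)
              (G.sFrom (i + k) (i + k - i) (G.s (i + k) a)) =
              G.sDownTo (i + k) i (by omega) (G.s (i + k) a) from rfl, e2, castL_rfl]
      _ = G.sIter (k + 1) i (G.castL (by omega) a) := by
          show G.sIter k i (G.s (i + k) a) =
            G.sIter k i (G.s (i + k) (G.castL (by omega : i + k + 1 = i + (k + 1)) a))
          rw [G.castL_self]

end LinGlob

namespace LinGlob
variable {K : Type} [Field K] {n : ℕ} (G : LinGlob K n)

theorem sIter_congr {k k' j : ℕ} (h : k = k') {x : G.L (j + k)} {x' : G.L (j + k')}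
    (hx : HEq x x') : G.sIter k j x = G.sIter k' j x' := by
  subst h; rw [eq_of_heq hx]

theorem sDownTo_eq' {m i k : ℕ} (h : i + k = m) (him : i ≤ m) (a : G.L m) :
    G.sDownTo m i him a = G.sIter k i (G.castL h.symm a) := G.sDownTo_eq h a

theorem sDownTo_self {m : ℕ} (him : m ≤ m) (a : G.L m) : G.sDownTo m m him a = a := by
  rw [G.sDownTo_eq' (show m + 0 = m by omega) him]
  exact G.castL_self _ a

theorem sDownTo_add {m i : ℕ} (h : i ≤ m) (x y : G.L m) :
    G.sDownTo m i h (x + y) = G.sDownTo m i h x + G.sDownTo m i h y := by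
  simp only [G.sDownTo_eq' (show i + (m - i) = m by omega) h, G.castL_add, G.sIter_add]

theorem sDownTo_sub {m i : ℕ} (h : i ≤ m) (x y : G.L m) :
    G.sDownTo m i h (x - y) = G.sDownTo m i h x - G.sDownTo m i h y := by
  simp only [G.sDownTo_eq' (show i + (m - i) = m by omega) h, G.castL_sub, G.sIter_sub]

@[simp] theorem sDownTo_zero {m i : ℕ} (h : i ≤ m) :
    G.sDownTo m i h (0 : G.L m) = 0 := by
  rw [G.sDownTo_eq' (show i + (m - i) = m by omega) h, G.castL_zero, G.sIter_zero]

theorem sIter_bottom (k j : ℕ) (b : G.L ((j + 1) + k)) :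
    G.s j (G.sIter k (j + 1) b) = G.sIter (k + 1) j (G.castL (by omega) b) := by
  induction k with
  | zero =>
    show G.s j b = G.s (j + 0) (G.castL (by omega : (j+1)+0 = j+(0+1)) b)
    rw [G.castL_self]; rfl
  | succ k ih =>
    show G.s j (G.sIter k (j + 1) (G.s ((j + 1) + k) b)) =
      G.sIter (k + 1) j (G.s (j + (k + 1)) (G.castL (by omega : (j+1)+(k+1) = j+(k+1+1)) b))
    rw [G.s_castL (show (j + 1) + k = j + (k + 1) by omega)]
    exact ih _

theorem s_sDownTo {m j : ℕ} (h : j + 1 ≤ m) (hj : j ≤ m) (a : G.L m) :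
    G.s j (G.sDownTo m (j + 1) h a) = G.sDownTo m j hj a := by
  rw [G.sDownTo_eq' (show (j + 1) + (m - (j + 1)) = m by omega) h a,
      G.sDownTo_eq' (show j + (m - j) = m by omega) hj a, G.sIter_bottom]
  exact G.sIter_congr (by omega)
    (((G.castL_heq _ _).trans (G.castL_heq _ _)).trans (G.castL_heq _ _).symm)

theorem sDownTo_top {i j : ℕ} (hij : i ≤ j) (h1 : i ≤ j + 1) (b : G.L (j + 1)) :
    G.sDownTo (j + 1) i h1 b = G.sDownTo j i hij (G.s j b) := by
  calc G.sDownTo (j + 1) i h1 b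
      = G.sIter (j + 1 - i) i (G.castL (show j + 1 = i + (j + 1 - i) by omega) b) :=
        G.sDownTo_eq' (by omega) h1 b
    _ = G.sIter ((j - i) + 1) i (G.castL (show j + 1 = i + ((j - i) + 1) by omega) b) :=
        G.sIter_congr (by omega) ((G.castL_heq _ _).trans (G.castL_heq _ _).symm)
    _ = G.sIter (j - i) i (G.s (i + (j - i))
          (G.castL (show j + 1 = i + ((j - i) + 1) by omega) b)) := rfl
    _ = G.sIter (j - i) i (G.castL (show j = i + (j - i) by omega) (G.s j b)) := by
        rw [G.s_castL (show j = i + (j - i) by omega)]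
    _ = G.sDownTo j i hij (G.s j b) := (G.sDownTo_eq' (by omega) hij _).symm

end LinGlob

namespace LinGlobId
variable {K : Type} [Field K] {n : ℕ} (G : LinGlobId K n)

theorem oneUp_add (j k : ℕ) (x y : G.L j) :
    G.oneUp j k (x + y) = G.oneUp j k x + G.oneUp j k y := by
  induction k with
  | zero => rfl
  | succ k ih => simp only [oneUp, ih, map_add]

theorem oneUp_smul (j k : ℕ) (c : K) (x : G.L j) :
    G.oneUp j k (c • x) = c • G.oneUp j k x := by
  induction k with
  | zero => rfl
  | succ k ih => simp only [oneUp, ih, map_smul]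

theorem oneUp_heq {j k k' : ℕ} (h : k = k') (a : G.L j) :
    HEq (G.oneUp j k a) (G.oneUp j k' a) := by subst h; rfl

theorem oneUpTo_eq {j m k : ℕ} (h : j + k = m) (hjm : j ≤ m) (a : G.L j) :
    G.oneUpTo j m hjm a = G.toLinGlob.castL h (G.oneUp j k a) := by
  unfold oneUpTo
  exact G.toLinGlob.castL_eq_castL _ _ (G.oneUp_heq (by omega) a)

theorem oneUpTo_add {j m : ℕ} (hjm : j ≤ m) (x y : G.L j) :
    G.oneUpTo j m hjm (x + y) = G.oneUpTo j m hjm x + G.oneUpTo j m hjm y := by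
  simp only [G.oneUpTo_eq (show j + (m - j) = m by omega) hjm, G.oneUp_add,
    G.toLinGlob.castL_add]

theorem oneUpTo_smul {j m : ℕ} (hjm : j ≤ m) (c : K) (x : G.L j) :
    G.oneUpTo j m hjm (c • x) = c • G.oneUpTo j m hjm x := by
  simp only [G.oneUpTo_eq (show j + (m - j) = m by omega) hjm, G.oneUp_smul,
    G.toLinGlob.castL_smul]

theorem sIter_oneUp (i l k : ℕ) (hn : i + l + k ≤ n) (a : G.L (i + l)) :
    G.toLinGlob.sIter (l + k) i
      (G.toLinGlob.castL (by omega : (i + l) + k = i + (l + k)) (G.oneUp (i + l) k a)) =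
      G.toLinGlob.sIter l i a := by
  induction k with
  | zero => rw [G.toLinGlob.castL_self]; rfl
  | succ k ih =>
    show G.toLinGlob.sIter (l + k) i (G.s (i + (l + k))
        (G.toLinGlob.castL (by omega : (i + l) + (k+1) = i + (l + (k+1)))
          (G.one ((i + l) + k) (G.oneUp (i + l) k a)))) = G.toLinGlob.sIter l i a
    rw [G.toLinGlob.s_castL (show (i + l) + k = i + (l + k) by omega)]
    rw [G.one_s ((i + l) + k) (by omega)]
    exact ih (by omega)

/-- `s^{m-i} ∘ 1^{m-j} = s^{j-i}` on `L j`, for `i ≤ j ≤ m ≤ n`. -/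
theorem sDownTo_oneUpTo {i j m : ℕ} (hn : m ≤ n) (hij : i ≤ j) (hjm : j ≤ m)
    (him : i ≤ m) (b : G.L j) :
    G.toLinGlob.sDownTo m i him (G.oneUpTo j m hjm b) = G.toLinGlob.sDownTo j i hij b := by
  obtain ⟨l, rfl⟩ : ∃ l, j = i + l := ⟨j - i, by omega⟩
  obtain ⟨k, rfl⟩ : ∃ k, m = i + l + k := ⟨m - (i + l), by omega⟩
  rw [G.oneUpTo_eq (show (i + l) + k = i + l + k from rfl) hjm b,
      G.toLinGlob.sDownTo_eq' (show i + (l + k) = i + l + k by omega) him,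
      G.toLinGlob.castL_castL,
      G.toLinGlob.sDownTo_eq' (show i + l = i + l from rfl) hij]
  rw [G.toLinGlob.castL_self]
  exact G.sIter_oneUp i l k hn b
end LinGlobId

namespace LinGlobId
variable {K : Type} [Field K] {n : ℕ} (G : LinGlobId K n)

theorem sDownTo_sum {m i : ℕ} (h : i ≤ m) {ι : Type*} (s : Finset ι) (f : ι → G.L m) :
    G.toLinGlob.sDownTo m i h (∑ j ∈ s, f j) =
      ∑ j ∈ s, G.toLinGlob.sDownTo m i h (f j) := by
  exact map_sum (AddMonoidHom.mk' (G.toLinGlob.sDownTo m i h)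
    (G.toLinGlob.sDownTo_add h)) f s

theorem betaC_succ {m : ℕ} (a : G.L m) (i : ℕ) (hi : i ≤ m) :
    G.betaC m a (i + 1) = G.betaC m a i +
      G.oneUpTo i m hi (G.toLinGlob.sDownTo m i hi (a - G.betaC m a i)) := by
  rw [betaC, dif_pos hi]

/-- key cancellation: `s^{m-i}(a - c_{i+1}) = 0`. -/
theorem sDownTo_sub_betaC_succ {m i : ℕ} (hn : m ≤ n) (hi : i ≤ m) (a : G.L m) :
    G.toLinGlob.sDownTo m i hi (a - G.betaC m a (i + 1)) = 0 := by
  rw [G.betaC_succ a i hi, sub_add_eq_sub_sub, G.toLinGlob.sDownTo_sub,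
    G.sDownTo_oneUpTo hn (le_refl i) hi hi, G.toLinGlob.sDownTo_self, sub_self]

theorem betaC_last {m : ℕ} (hn : m ≤ n) (a : G.L m) : G.betaC m a (m + 1) = a := by
  have h := G.sDownTo_sub_betaC_succ hn (le_refl m) a
  rw [G.toLinGlob.sDownTo_self] at h
  have := sub_eq_zero.mp h
  exact this.symm

end LinGlobId

namespace LinGlob
variable {K : Type} [Field K] {n : ℕ} (G : LinGlob K n)

theorem sDownTo_of_s_eq_zero {i j : ℕ} (hij : i ≤ j) (h1 : i ≤ j + 1)
    (b : G.L (j + 1)) (hb : G.s j b = 0) : G.sDownTo (j + 1) i h1 b = 0 := by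
  rw [G.sDownTo_top hij h1 b, hb, G.sDownTo_zero]

end LinGlob

namespace LinGlobId
variable {K : Type} [Field K] {n : ℕ} (G : LinGlobId K n)

theorem sDownTo_tail {m : ℕ} (hn : m ≤ n) {i : ℕ} (hi : i ≤ m)
    (v : ∀ i : Fin (m + 1), G.L i)
    (hv : ∀ (j : ℕ) (h : j + 1 ≤ m), G.s j (v ⟨j + 1, Nat.lt_succ_of_le h⟩) = 0) :
    G.toLinGlob.sDownTo m i hi
      (∑ j ∈ Finset.univ.filter (fun j : Fin (m + 1) => ¬ ((j : ℕ) < i)),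
        G.oneUpTo (j : ℕ) m (Fin.is_le j) (v j)) = v ⟨i, by omega⟩ := by
  rw [G.sDownTo_sum]
  rw [Finset.sum_eq_single_of_mem (⟨i, by omega⟩ : Fin (m + 1)) (by simp)]
  · exact (G.sDownTo_oneUpTo hn (le_refl i) hi hi (v ⟨i, by omega⟩)).trans
      (G.toLinGlob.sDownTo_self (le_refl i) _)
  · rintro ⟨jv, hjv⟩ hmem hne
    simp only [Finset.mem_filter, Finset.mem_univ, true_and, not_lt] at hmem
    have hlt : i < jv := by
      rcases lt_or_eq_of_le hmem with h | h
      · exact h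
      · exact absurd (Fin.ext h.symm) hne
    obtain ⟨j0, rfl⟩ : ∃ j0, jv = j0 + 1 := ⟨jv - 1, by omega⟩
    rw [G.sDownTo_oneUpTo hn (by omega : i ≤ j0 + 1) (by omega) hi]
    exact G.toLinGlob.sDownTo_of_s_eq_zero (by omega) (by omega) _ (hv j0 (by omega))

theorem alpha_sub_head {m : ℕ} (i : ℕ) (v : ∀ i : Fin (m + 1), G.L i) :
    G.alphaFun m v -
      (∑ j ∈ Finset.univ.filter (fun j : Fin (m + 1) => (j : ℕ) < i),
        G.oneUpTo (j : ℕ) m (Fin.is_le j) (v j)) =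
      ∑ j ∈ Finset.univ.filter (fun j : Fin (m + 1) => ¬ ((j : ℕ) < i)),
        G.oneUpTo (j : ℕ) m (Fin.is_le j) (v j) := by
  rw [alphaFun, ← Finset.sum_filter_add_sum_filter_not Finset.univ
    (fun j : Fin (m + 1) => (j : ℕ) < i), add_sub_cancel_left]

theorem betaC_alpha {m : ℕ} (hn : m ≤ n) (v : ∀ i : Fin (m + 1), G.L i)
    (hv : ∀ (j : ℕ) (h : j + 1 ≤ m), G.s j (v ⟨j + 1, Nat.lt_succ_of_le h⟩) = 0) :
    ∀ i, i ≤ m + 1 →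
      G.betaC m (G.alphaFun m v) i =
        ∑ j ∈ Finset.univ.filter (fun j : Fin (m + 1) => (j : ℕ) < i),
          G.oneUpTo (j : ℕ) m (Fin.is_le j) (v j) := by
  intro i
  induction i with
  | zero => intro _; simp [betaC]
  | succ i ih =>
    intro h1
    have hi : i ≤ m := by omega
    rw [G.betaC_succ _ i hi, ih (by omega), G.alpha_sub_head i v,
      G.sDownTo_tail hn hi v hv]
    have hins : Finset.univ.filter (fun j : Fin (m + 1) => (j : ℕ) < i + 1) =
        insert (⟨i, by omega⟩ : Fin (m + 1))
          (Finset.univ.filter (fun j : Fin (m + 1) => (j : ℕ) < i)) := by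
      ext j
      simp only [Finset.mem_filter, Finset.mem_univ, true_and, Finset.mem_insert,
        Fin.ext_iff]
      omega
    rw [hins, Finset.sum_insert (by simp)]
    exact add_comm _ _

end LinGlobId

/-- Let `L` be an n-globular K-vector space with linear identity maps,
`V_i = ker (s : L_i → L_{i-1})` (`V_0 = L_0`).  For each `m ≤ n`, the linear map
`α_m : V_0 ⊕ ⋯ ⊕ V_m → L_m`, `α_m (v_0,…,v_m) = Σᵢ 1^{m-i}_{v_i}`, is a linear
isomorphism, and its inverse is `β_m` computed component by component (from left to
right) by `β_m(a)_i = s^{m-i}(a − Σ_{j<i} 1^{m-j}_{p_j β_m(a)})`. -/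
theorem alpha_linear_isomorphism (K : Type) [Field K] (n : ℕ) (G : LinGlobId K n)
    (m : ℕ) (hm : m ≤ n) :
    (∀ v w : ∀ i : Fin (m + 1), G.L i,
        G.alphaFun m (v + w) = G.alphaFun m v + G.alphaFun m w) ∧
    (∀ (c : K) (v : ∀ i : Fin (m + 1), G.L i),
        G.alphaFun m (c • v) = c • G.alphaFun m v) ∧
    (∀ (a : G.L m) (j : ℕ) (h : j + 1 ≤ m),
        G.s j (G.betaFun m a ⟨j + 1, by omega⟩) = 0) ∧
    (∀ a : G.L m, G.alphaFun m (G.betaFun m a) = a) ∧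
    (∀ v : ∀ i : Fin (m + 1), G.L i,
        (∀ (j : ℕ) (h : j + 1 ≤ m), G.s j (v ⟨j + 1, by omega⟩) = 0) →
        G.betaFun m (G.alphaFun m v) = v) := by
  refine ⟨?_, ?_, ?_, ?_, ?_⟩
  · intro v w
    simp only [LinGlobId.alphaFun, Pi.add_apply, G.oneUpTo_add,
      Finset.sum_add_distrib]
  · intro c v
    simp only [LinGlobId.alphaFun, Pi.smul_apply, G.oneUpTo_smul, Finset.smul_sum]
  · intro a j h
    show G.s j (G.toLinGlob.sDownTo m (j + 1) h (a - G.betaC m a (j + 1))) = 0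
    rw [G.toLinGlob.s_sDownTo h (by omega)]
    exact G.sDownTo_sub_betaC_succ hm (by omega) a
  · intro a
    have ht : ∀ i : Fin (m + 1),
        G.oneUpTo (i : ℕ) m (Fin.is_le i) (G.betaFun m a i) =
          G.betaC m a ((i : ℕ) + 1) - G.betaC m a (i : ℕ) := by
      intro i
      rw [G.betaC_succ a (i : ℕ) (Fin.is_le i), add_sub_cancel_left]
      rfl
    rw [LinGlobId.alphaFun]
    simp only [ht]
    rw [Fin.sum_univ_eq_sum_range (fun i => G.betaC m a (i + 1) - G.betaC m a i),
      Finset.sum_range_sub (fun i => G.betaC m a i), G.betaC_last hm a]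
    show a - 0 = a
    rw [sub_zero]
  · intro v hv
    funext i
    show G.toLinGlob.sDownTo m (i : ℕ) (Fin.is_le i)
      (G.alphaFun m v - G.betaC m (G.alphaFun m v) (i : ℕ)) = v i
    rw [G.betaC_alpha hm v hv (i : ℕ) (by omega), G.alpha_sub_head (i : ℕ) v,
      G.sDownTo_tail hm (Fin.is_le i) v hv]
end

section
/- Let L be an n-globular K-vector space, i.e. K-vector spaces L_n, …, L_0 with linear maps s, t : L_m → L_{m-1} satisfying s∘s = s∘t and t∘s = t∘t, and set V_m = ker(s : L_m → L_{m-1}) (with V_0 = L_0). Then for every m ∈ {1,…,n}, t maps V_m into V_{m-1}, and t(t(v)) = 0 for every v ∈ V_m with m ≥ 2; hence the spaces V_0,…,V_n together with the differential d_m = t|_{V_m} form an (n+1)-term chain complex of K-vector spaces. -/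
/-- Let `L` be an n-globular K-vector space and set
`V_m = ker (s : L_m → L_{m-1})` (with `V_0 = L_0`).  Then `t` maps `V_m` into `V_{m-1}`
(i.e. `s (t v) = 0` whenever `s v = 0`), and `t (t v) = 0` for `v ∈ V_m`, `m ≥ 2`;
hence the spaces `V_0, …, V_n` with differential `d_m = t|_{V_m}` form an `(n+1)`-term
chain complex of K-vector spaces. -/
theorem glob_kernels_chainComplex (K : Type) [Field K] (n : ℕ) (G : LinGlob K n) :
    (∀ m (v : G.L (m + 2)), G.s (m + 1) v = 0 → G.s m (G.t (m + 1) v) = 0) ∧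
    (∀ m (v : G.L (m + 2)), G.s (m + 1) v = 0 → G.t m (G.t (m + 1) v) = 0) := by
  constructor
  · intro m v hv
    rw [← G.glob_s m v, hv, map_zero]
  · intro m v hv
    rw [← G.glob_t m v, hv, map_zero]
end

section
/- Let L be an n-globular K-vector space with linear identity maps, and identify each L_m with V_0 ⊕ ⋯ ⊕ V_m (V_i = ker s_i) via the isomorphism sending (v_0,…,v_m) to Σ_i 1^{m-i}_{v_i}; under this identification s(v_0,…,v_m) = (v_0,…,v_{m-1}), t(v_0,…,v_m) = (v_0,…,v_{m-1} + t v_m) and 1_{(v_0,…,v_m)} = (v_0,…,v_m,0). Suppose that for some 0 ≤ p < m ≤ n a linear map ∘_p, defined on the subspace of pairs (v,w) ∈ L_m × L_m with t^{m-p}(v) = s^{m-p}(w), satisfies the unit laws 1^{m-p}_{s^{m-p}(v)} ∘_p v = v and v ∘_p 1^{m-p}_{t^{m-p}(v)} = v. Then necessarily (v_0,…,v_m) ∘_p (w_0,…,w_m) = (v_0,…,v_p, v_{p+1}+w_{p+1}, …, v_m+w_m). In particular, an n-globular vector space with linear identities admits at most one completion by linear composition maps to a linear n-category. -/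
/- The explicit model: L_m = V_0 × ⋯ × V_m with
   s(v_0,…,v_m) = (v_0,…,v_{m-1}),  t(v_0,…,v_m) = (v_0,…,v_{m-1} + d v_m),
   1_{(v_0,…,v_m)} = (v_0,…,v_m,0),
   (v ∘_p w) = (v_0,…,v_p, v_{p+1}+w_{p+1}, …, v_m+w_m). -/

namespace GlobModel

variable {K : Type} [Field K] {V : ℕ → Type} [∀ i, AddCommGroup (V i)]
  [∀ i, Module K (V i)]

/-- The space of `m`-cells `L_m = V_0 × ⋯ × V_m`. -/
abbrev Cells (V : ℕ → Type) (m : ℕ) : Type := ∀ i : Fin (m + 1), V i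

/-- Source map `s (v_0,…,v_m) = (v_0,…,v_{m-1})`. -/
def smap (m : ℕ) (v : Cells V (m + 1)) : Cells V m := fun i => v ⟨i.val, by omega⟩

/-- Target map `t (v_0,…,v_m) = (v_0,…,v_{m-1} + d v_m)`. -/
def tmap (d : ∀ i, V (i + 1) →ₗ[K] V i) (m : ℕ) (v : Cells V (m + 1)) : Cells V m :=
  fun i =>
    Fin.lastCases (motive := fun j : Fin (m + 1) => V j)
      (v ⟨m, by omega⟩ + d m (v ⟨m + 1, by omega⟩))
      (fun j => v ⟨j.val, by omega⟩) i

/-- Identity map `1_{(v_0,…,v_m)} = (v_0,…,v_m,0)`. -/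
def onemap (m : ℕ) (v : Cells V m) : Cells V (m + 1) := fun i =>
  Fin.lastCases (motive := fun j : Fin (m + 2) => V j) 0 (fun j => v ⟨j.val, by omega⟩) i

/-- Composition along a `p`-cell:
`(v ∘_p w)_i = v_i` for `i ≤ p` and `v_i + w_i` for `i > p`. -/
def compmap (p : ℕ) {m : ℕ} (v w : Cells V m) : Cells V m := fun i =>
  if (i : ℕ) ≤ p then v i else v i + w i

/-- One application of the source map (junk identity at level 0). -/
def sstep : ∀ m, Cells V m → Cells V (m - 1)
  | 0, v => v
  | (m + 1), v => smap m v

/-- One application of the target map (junk identity at level 0). -/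
def tstep (d : ∀ i, V (i + 1) →ₗ[K] V i) : ∀ m, Cells V m → Cells V (m - 1)
  | 0, v => v
  | (m + 1), v => tmap d m v

/-- Iterated source map `s^k : L_m → L_{m-k}`. -/
def sIter (m : ℕ) : ∀ k, Cells V m → Cells V (m - k)
  | 0, v => v
  | (k + 1), v => sstep (m - k) (sIter m k v)

/-- Iterated target map `t^k : L_m → L_{m-k}`. -/
def tIter (d : ∀ i, V (i + 1) →ₗ[K] V i) (m : ℕ) : ∀ k, Cells V m → Cells V (m - k)
  | 0, v => v
  | (k + 1), v => tstep d (m - k) (tIter d m k v)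

/-- Iterated identity map `1^k : L_j → L_{j+k}`. -/
def oneIter : ∀ (j k : ℕ), Cells V j → Cells V (j + k)
  | _, 0, v => v
  | j, (k + 1), v => onemap (j + k) (oneIter j k v)

/-- Cast between levels. -/
def castC {a b : ℕ} (h : a = b) (v : Cells V a) : Cells V b := h ▸ v

/-- Composability of two `m`-cells along a `p`-cell: `t^{m-p} v = s^{m-p} w`. -/
def Composable (d : ∀ i, V (i + 1) →ₗ[K] V i) (p : ℕ) {m : ℕ}
    (v w : Cells V m) : Prop :=
  tIter d m (m - p) v = sIter m (m - p) w

end GlobModel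


open GlobModel

section Aux

set_option linter.unusedSectionVars false

variable {K : Type} [Field K] {V : ℕ → Type} [∀ i, AddCommGroup (V i)]
  [∀ i, Module K (V i)]

theorem castC_apply {a b : ℕ} (h : a = b) (v : Cells V a) (i : Fin (b + 1)) :
    castC h v i = v ⟨i.val, by omega⟩ := by subst h; rfl

theorem sstep_apply (a r : ℕ) (h : a = r + 1) (x : Cells V a) (i : Fin (a - 1 + 1)) :
    sstep a x i = x ⟨i.val, by omega⟩ := by subst h; rfl

theorem tmap_apply_lt (d : ∀ i, V (i + 1) →ₗ[K] V i) (m : ℕ)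
    (x : Cells V (m + 1)) (j : Fin m) :
    tmap d m x (Fin.castSucc j) = x ⟨j.val, by omega⟩ := by
  simp [tmap]

theorem tmap_apply_last (d : ∀ i, V (i + 1) →ₗ[K] V i) (m : ℕ) (x : Cells V (m + 1)) :
    tmap d m x (Fin.last m) = x ⟨m, by omega⟩ + d m (x ⟨m + 1, by omega⟩) := by
  simp [tmap]

theorem tstep_apply_lt (d : ∀ i, V (i + 1) →ₗ[K] V i) (a r : ℕ) (h : a = r + 1)
    (x : Cells V a) (i : Fin (a - 1 + 1)) (hi : i.val < a - 1) :
    tstep d a x i = x ⟨i.val, by omega⟩ := by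
  subst h
  obtain ⟨iv, hlt⟩ := i
  have hi' : iv < r := by simpa using hi
  have e := tmap_apply_lt d r x ⟨iv, hi'⟩
  exact e.trans rfl

theorem tstep_apply_last (d : ∀ i, V (i + 1) →ₗ[K] V i) (a r : ℕ) (h : a = r + 1)
    (x : Cells V a) :
    tstep d a x ⟨a - 1, by omega⟩ =
      x ⟨a - 1, by omega⟩ + d (a - 1) (x ⟨a - 1 + 1, by omega⟩) := by
  subst h
  exact tmap_apply_last d r x

theorem onemap_apply_lt (m : ℕ) (v : Cells V m) (j : Fin (m + 1)) :
    onemap m v (Fin.castSucc j) = v ⟨j.val, by omega⟩ := by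
  simp [onemap]

theorem onemap_apply_last (m : ℕ) (v : Cells V m) :
    onemap m v (Fin.last (m + 1)) = 0 := by
  simp [onemap]

theorem sIter_apply (m : ℕ) (v : Cells V m) :
    ∀ (k : ℕ) (_ : k ≤ m) (i : Fin (m - k + 1)),
      sIter m k v i = v ⟨i.val, by omega⟩ := by
  intro k
  induction k with
  | zero => intro _ i; rfl
  | succ k ih =>
    intro hk i
    have h1 : sIter m (k + 1) v i = sstep (m - k) (sIter m k v) i := rfl
    rw [h1, sstep_apply (m - k) (m - (k + 1)) (by omega) (sIter m k v) i]
    exact ih (by omega) ⟨i.val, by omega⟩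

set_option maxHeartbeats 1000000 in
theorem tIter_apply_of_zero (d : ∀ i, V (i + 1) →ₗ[K] V i) (m : ℕ) :
    ∀ (k : ℕ) (_ : k ≤ m) (u : Cells V m)
      (_ : ∀ i : Fin (m + 1), m - k < i.val → u i = 0) (i : Fin (m - k + 1)),
      tIter d m k u i = u ⟨i.val, by omega⟩ := by
  intro k
  induction k with
  | zero => intro _ u _ i; rfl
  | succ k ih =>
    intro hk u hu i
    have ih' := ih (by omega) u (fun j hj => hu j (by omega))
    have h1 : tIter d m (k + 1) u i = tstep d (m - k) (tIter d m k u) i := rfl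
    rw [h1]
    by_cases hcase : i.val < m - (k + 1)
    · rw [tstep_apply_lt d (m - k) (m - (k + 1)) (by omega) (tIter d m k u) i
        (by omega)]
      exact ih' ⟨i.val, by omega⟩
    · obtain ⟨iv, hlt⟩ := i
      have hcase' : ¬ iv < m - (k + 1) := hcase
      have hiv : iv = m - k - 1 := by omega
      subst hiv
      have e1 := tstep_apply_last d (m - k) (m - (k + 1)) (by omega) (tIter d m k u)
      refine Eq.trans (Eq.trans ?_ e1) ?_
      · rfl
      · rw [ih' ⟨m - k - 1, by omega⟩, ih' ⟨m - k - 1 + 1, by omega⟩,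
          hu ⟨m - k - 1 + 1, by omega⟩
            (show m - (k + 1) < m - k - 1 + 1 by omega), map_zero, add_zero]

theorem oneIter_apply_le (j : ℕ) (x : Cells V j) :
    ∀ (k : ℕ) (i : Fin (j + k + 1)) (_ : i.val ≤ j),
      oneIter j k x i = x ⟨i.val, by omega⟩ := by
  intro k
  induction k with
  | zero => intro i _; rfl
  | succ k ih =>
    intro i hi
    have h1 : oneIter j (k + 1) x i = onemap (j + k) (oneIter j k x) i := rfl
    rw [h1]
    obtain ⟨iv, hlt⟩ := i
    have hi2 : iv ≤ j := hi
    have hlt' : iv < j + k + 1 := by omega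
    have e := onemap_apply_lt (j + k) (oneIter j k x) ⟨iv, hlt'⟩
    refine Eq.trans (Eq.trans ?_ e) ?_
    · rfl
    · exact ih ⟨iv, by omega⟩ hi

theorem oneIter_apply_gt (j : ℕ) (x : Cells V j) :
    ∀ (k : ℕ) (i : Fin (j + k + 1)) (_ : j < i.val),
      oneIter j k x i = 0 := by
  intro k
  induction k with
  | zero => intro i hi; exact absurd i.isLt (by omega)
  | succ k ih =>
    intro i hi
    have h1 : oneIter j (k + 1) x i = onemap (j + k) (oneIter j k x) i := rfl
    rw [h1]
    obtain ⟨iv, hlt⟩ := i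
    have hi2 : j < iv := hi
    by_cases hcase : iv < j + k + 1
    · have e := onemap_apply_lt (j + k) (oneIter j k x) ⟨iv, hcase⟩
      refine Eq.trans (Eq.trans ?_ e) ?_
      · rfl
      · exact ih ⟨iv, by omega⟩ hi
    · have hiv : iv = j + k + 1 := by omega
      subst hiv
      exact onemap_apply_last (j + k) (oneIter j k x)

end Aux


/-- Under the identification of `L_m` with `V_0 ⊕ ⋯ ⊕ V_m`, any
linear composition map `∘_p` (0 ≤ p < m ≤ n), defined on the subspace of pairs with
`t^{m-p} v = s^{m-p} w` and satisfying the unit laws, is necessarily given by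
`(v_0,…,v_m) ∘_p (w_0,…,w_m) = (v_0,…,v_p, v_{p+1}+w_{p+1}, …, v_m+w_m)`.
In particular, an n-globular vector space with linear identities admits at most one
completion by linear composition maps to a linear n-category. -/
theorem composition_is_unique (K : Type) [Field K] (V : ℕ → Type)
    [∀ i, AddCommGroup (V i)] [∀ i, Module K (V i)]
    (d : ∀ i, V (i + 1) →ₗ[K] V i)
    (n p m : ℕ) (hpm : p < m) (hmn : m ≤ n)
    (c : Cells V m → Cells V m → Cells V m)
    (hadd : ∀ v w v' w', Composable d p v w → Composable d p v' w' →
        c (v + v') (w + w') = c v w + c v' w')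
    (hsmul : ∀ (k : K) (v w), Composable d p v w → c (k • v) (k • w) = k • c v w)
    (hunitL : ∀ v : Cells V m,
        c (castC (by omega : m - (m - p) + (m - p) = m)
            (oneIter (m - (m - p)) (m - p) (sIter m (m - p) v))) v = v)
    (hunitR : ∀ v : Cells V m,
        c v (castC (by omega : m - (m - p) + (m - p) = m)
            (oneIter (m - (m - p)) (m - p) (tIter d m (m - p) v))) = v) :
    ∀ v w, Composable d p v w →
      ∀ i : Fin (m + 1), c v w i = if (i : ℕ) ≤ p then v i else v i + w i := by
  intro v w hvw i
  have hT : tIter d m (m - p) v = sIter m (m - p) w := hvw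
  set F : Cells V m :=
    castC (by omega : m - (m - p) + (m - p) = m)
      (oneIter (m - (m - p)) (m - p) (tIter d m (m - p) v)) with hFdef
  have hFle : ∀ (i : Fin (m + 1)) (_ : i.val ≤ p),
      F i = tIter d m (m - p) v ⟨i.val, by omega⟩ := by
    intro i hi
    rw [hFdef, castC_apply]
    exact oneIter_apply_le (m - (m - p)) (tIter d m (m - p) v) (m - p)
      ⟨i.val, by omega⟩ (show (i : ℕ) ≤ m - (m - p) by omega)
  have hFgt : ∀ i : Fin (m + 1), p < i.val → F i = 0 := by
    intro i hi
    rw [hFdef, castC_apply]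
    exact oneIter_apply_gt (m - (m - p)) (tIter d m (m - p) v) (m - p)
      ⟨i.val, by omega⟩ (show m - (m - p) < (i : ℕ) by omega)
  have hSF : sIter m (m - p) F = tIter d m (m - p) v := by
    funext i
    rw [sIter_apply m F (m - p) (by omega) i]
    exact hFle ⟨i.val, by omega⟩ (show (i : ℕ) ≤ p by have := i.isLt; omega)
  have hTF : tIter d m (m - p) F = tIter d m (m - p) v := by
    funext i
    rw [tIter_apply_of_zero d m (m - p) (by omega) F
      (fun j hj => hFgt j (by omega)) i]
    exact hFle ⟨i.val, by omega⟩ (show (i : ℕ) ≤ p by have := i.isLt; omega)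
  have cvF : Composable d p v F := hSF.symm
  have cFF : Composable d p F F := hTF.trans hSF.symm
  have cFw : Composable d p F w := hTF.trans hT
  have hcvF : c v F = v := hunitR v
  have hFw : c F w = w := by
    have h := hunitL w
    rw [← hT] at h
    exact h
  have hFF : c F F = F := by
    have h := hunitR F
    rw [hTF] at h
    exact h
  have key : c v w + F = v + w := by
    have h1 : c (v + F) (w + F) = c v w + c F F := hadd v w F F hvw cFF
    have h2 : c (v + F) (F + w) = c v F + c F w := hadd v F F w cvF cFw
    rw [hFF] at h1
    rw [hcvF, hFw] at h2
    calc c v w + F = c (v + F) (w + F) := h1.symm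
      _ = c (v + F) (F + w) := by rw [add_comm w F]
      _ = v + w := h2
  have hcomp : c v w i = v i + w i - F i := by
    have h3 : c v w = v + w - F := by
      rw [← key]; abel
    rw [h3]
    simp [Pi.sub_apply, Pi.add_apply]
  by_cases hip : (i : ℕ) ≤ p
  · have hFi : F i = w i := by
      rw [hFle i hip, hT, sIter_apply m w (m - p) (by omega) ⟨i.val, by omega⟩]
    rw [hcomp, hFi, if_pos hip]
    abel
  · rw [hcomp, hFgt i (by omega), if_neg hip, sub_zero]
end

section
/- Let L and L' be linear n-categories over a field K and let F_m : L_m → L'_m (0 ≤ m ≤ n) be linear maps that commute with the source maps, the target maps and the identity maps. Then F automatically commutes with all composition maps: whenever v, w ∈ L_m satisfy t^{m-p}(v) = s^{m-p}(w), also t^{m-p}(F_m v) = s^{m-p}(F_m w) and F_m(v ∘_p w) = F_m(v) ∘_p F_m(w); hence F is a linear n-functor. -/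
/- STATEMENT 0: the category of linear n-categories over a field K is equivalent to the
category of (n+1)-term chain complexes of K-vector spaces (concentrated in degrees 0,…,n). -/

open CategoryTheory

namespace LinGlob

variable {K : Type} [Field K] {n : ℕ}

/-- One application of the target map (junk identity at level 0). -/
def tStep (G : LinGlob K n) : ∀ m, G.L m → G.L (m - 1)
  | 0, a => a
  | (m + 1), a => G.t m a

/-- Iterated target map `t^k : L m → L (m-k)`. -/
def tFrom (G : LinGlob K n) (m : ℕ) : ∀ k, G.L m → G.L (m - k)
  | 0, a => a
  | (k + 1), a => G.tStep (m - k) (G.tFrom m k a)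

/-- Two `m`-cells are composable along a `p`-cell if `t^{m-p} a = s^{m-p} b`. -/
def Composable (G : LinGlob K n) (p m : ℕ) (a b : G.L m) : Prop :=
  G.tFrom m (m - p) a = G.sFrom m (m - p) b

end LinGlob

/-- A linear n-category: an n-globular vector space with identities, together with
(linear, associative, unital, interchanging) composition maps `∘ₚ` of `m`-cells along
`p`-cells, `0 ≤ p < m ≤ n`, defined on composable pairs. -/
structure LinNCat (K : Type) [Field K] (n : ℕ) extends LinGlobId K n where
  comp : ∀ (p m : ℕ), L m → L m → L m
  comp_add : ∀ p m (a a' b b' : L m),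
      LinGlob.Composable toLinGlob p m a b → LinGlob.Composable toLinGlob p m a' b' →
      comp p m (a + a') (b + b') = comp p m a b + comp p m a' b'
  comp_smul : ∀ p m (c : K) (a b : L m), LinGlob.Composable toLinGlob p m a b →
      comp p m (c • a) (c • b) = c • comp p m a b
  s_comp_top : ∀ m (a b : L (m + 1)), LinGlob.Composable toLinGlob m (m + 1) a b →
      s m (comp m (m + 1) a b) = s m a
  t_comp_top : ∀ m (a b : L (m + 1)), LinGlob.Composable toLinGlob m (m + 1) a b →
      t m (comp m (m + 1) a b) = t m b
  s_comp : ∀ p m, p < m → ∀ (a b : L (m + 1)), LinGlob.Composable toLinGlob p (m + 1) a b →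
      s m (comp p (m + 1) a b) = comp p m (s m a) (s m b)
  t_comp : ∀ p m, p < m → ∀ (a b : L (m + 1)), LinGlob.Composable toLinGlob p (m + 1) a b →
      t m (comp p (m + 1) a b) = comp p m (t m a) (t m b)
  comp_assoc : ∀ p m (a b c : L m),
      LinGlob.Composable toLinGlob p m a b → LinGlob.Composable toLinGlob p m b c →
      comp p m (comp p m a b) c = comp p m a (comp p m b c)
  id_comp' : ∀ p m, (h : p < m) → ∀ a : L m,
      comp p m (LinGlob.castL toLinGlob (by omega : m - (m - p) + (m - p) = m)
        (LinGlobId.oneUp toLinGlobId (m - (m - p)) (m - p)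
          (LinGlob.sFrom toLinGlob m (m - p) a))) a = a
  comp_id' : ∀ p m, (h : p < m) → ∀ a : L m,
      comp p m a (LinGlob.castL toLinGlob (by omega : m - (m - p) + (m - p) = m)
        (LinGlobId.oneUp toLinGlobId (m - (m - p)) (m - p)
          (LinGlob.tFrom toLinGlob m (m - p) a))) = a
  interchange : ∀ q p m, q < p → p < m → ∀ (a b c d : L m),
      LinGlob.Composable toLinGlob p m a b → LinGlob.Composable toLinGlob p m c d →
      LinGlob.Composable toLinGlob q m a c → LinGlob.Composable toLinGlob q m b d →
      comp q m (comp p m a b) (comp p m c d) = comp p m (comp q m a c) (comp q m b d)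
  one_comp : ∀ p m (a b : L m), LinGlob.Composable toLinGlob p m a b →
      one m (comp p m a b) = comp p (m + 1) (one m a) (one m b)

section Aux
variable {K : Type} [Field K] {n : ℕ}

theorem castL_heq (G : LinGlob K n) {a b : ℕ} (h : a = b) (x : G.L a) :
    HEq (G.castL h x) x := by subst h; rfl

theorem castL_zero (G : LinGlob K n) {a b : ℕ} (h : a = b) :
    G.castL h (0 : G.L a) = 0 := by subst h; rfl

theorem sStep_sub (G : LinGlob K n) (m : ℕ) (x y : G.L m) :
    G.sStep m (x - y) = G.sStep m x - G.sStep m y := by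
  cases m with
  | zero => rfl
  | succ m => exact map_sub _ _ _

theorem tStep_sub (G : LinGlob K n) (m : ℕ) (x y : G.L m) :
    G.tStep m (x - y) = G.tStep m x - G.tStep m y := by
  cases m with
  | zero => rfl
  | succ m => exact map_sub _ _ _

theorem sStep_zero (G : LinGlob K n) (m : ℕ) :
    G.sStep m (0 : G.L m) = 0 := by
  cases m with
  | zero => rfl
  | succ m => exact map_zero _

theorem tStep_zero (G : LinGlob K n) (m : ℕ) :
    G.tStep m (0 : G.L m) = 0 := by
  cases m with
  | zero => rfl
  | succ m => exact map_zero _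

theorem sFrom_sub (G : LinGlob K n) (m k : ℕ) (x y : G.L m) :
    G.sFrom m k (x - y) = G.sFrom m k x - G.sFrom m k y := by
  induction k with
  | zero => rfl
  | succ k ih => simp only [LinGlob.sFrom, ih, sStep_sub]

theorem tFrom_sub (G : LinGlob K n) (m k : ℕ) (x y : G.L m) :
    G.tFrom m k (x - y) = G.tFrom m k x - G.tFrom m k y := by
  induction k with
  | zero => rfl
  | succ k ih => simp only [LinGlob.tFrom, ih, tStep_sub]

theorem sFrom_zero (G : LinGlob K n) (m k : ℕ) :
    G.sFrom m k (0 : G.L m) = 0 := by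
  induction k with
  | zero => rfl
  | succ k ih => simp only [LinGlob.sFrom, ih, sStep_zero]

theorem tFrom_zero (G : LinGlob K n) (m k : ℕ) :
    G.tFrom m k (0 : G.L m) = 0 := by
  induction k with
  | zero => rfl
  | succ k ih => simp only [LinGlob.tFrom, ih, tStep_zero]

theorem oneUp_zero (G : LinGlobId K n) (j k : ℕ) :
    G.oneUp j k (0 : G.L j) = 0 := by
  induction k with
  | zero => rfl
  | succ k ih => simp only [LinGlobId.oneUp, ih, map_zero]

theorem sStep_congr (G : LinGlob K n) {a b : ℕ} (h : a = b) {x : G.L a} {y : G.L b}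
    (hxy : HEq x y) : HEq (G.sStep a x) (G.sStep b y) := by
  subst h; rw [eq_of_heq hxy]

theorem tStep_congr (G : LinGlob K n) {a b : ℕ} (h : a = b) {x : G.L a} {y : G.L b}
    (hxy : HEq x y) : HEq (G.tStep a x) (G.tStep b y) := by
  subst h; rw [eq_of_heq hxy]

theorem sFrom_congr (G : LinGlob K n) {a b : ℕ} (h : a = b) (k : ℕ) {x : G.L a}
    {y : G.L b} (hxy : HEq x y) : HEq (G.sFrom a k x) (G.sFrom b k y) := by
  subst h; rw [eq_of_heq hxy]

theorem tFrom_congr (G : LinGlob K n) {a b : ℕ} (h : a = b) (k : ℕ) {x : G.L a}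
    {y : G.L b} (hxy : HEq x y) : HEq (G.tFrom a k x) (G.tFrom b k y) := by
  subst h; rw [eq_of_heq hxy]

theorem sFrom_one (G : LinGlobId K n) : ∀ (k m : ℕ), m < n → ∀ z : G.L m,
    HEq (G.sFrom (m + 1) (k + 1) (G.one m z)) (G.sFrom m k z)
  | 0, m, hm, z => heq_of_eq (G.one_s m hm z)
  | (k + 1), m, hm, z => by
      show HEq (G.sStep ((m + 1) - (k + 1)) (G.sFrom (m + 1) (k + 1) (G.one m z)))
        (G.sStep (m - k) (G.sFrom m k z))
      exact sStep_congr _ (by omega) (sFrom_one G k m hm z)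

theorem tFrom_one (G : LinGlobId K n) : ∀ (k m : ℕ), m < n → ∀ z : G.L m,
    HEq (G.tFrom (m + 1) (k + 1) (G.one m z)) (G.tFrom m k z)
  | 0, m, hm, z => heq_of_eq (G.one_t m hm z)
  | (k + 1), m, hm, z => by
      show HEq (G.tStep ((m + 1) - (k + 1)) (G.tFrom (m + 1) (k + 1) (G.one m z)))
        (G.tStep (m - k) (G.tFrom m k z))
      exact tStep_congr _ (by omega) (tFrom_one G k m hm z)

theorem sFrom_oneUp (G : LinGlobId K n) : ∀ (k j : ℕ), j + k ≤ n → ∀ x : G.L j,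
    HEq (G.sFrom (j + k) k (G.oneUp j k x)) x
  | 0, j, _, x => HEq.rfl
  | (k + 1), j, h, x =>
      (sFrom_one G k (j + k) (by omega) (G.oneUp j k x)).trans
        (sFrom_oneUp G k j (by omega) x)

theorem tFrom_oneUp (G : LinGlobId K n) : ∀ (k j : ℕ), j + k ≤ n → ∀ x : G.L j,
    HEq (G.tFrom (j + k) k (G.oneUp j k x)) x
  | 0, j, _, x => HEq.rfl
  | (k + 1), j, h, x =>
      (tFrom_one G k (j + k) (by omega) (G.oneUp j k x)).trans
        (tFrom_oneUp G k j (by omega) x)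

/-- In a linear n-category, composition is forced:
`a ∘ₚ b = a + b - 1^{m-p}(t^{m-p} a)` (for `m ≤ n`). -/
theorem comp_formula (C : LinNCat K n) (p m : ℕ) (hpm : p < m) (hmn : m ≤ n)
    (a b : C.L m) (hab : LinGlob.Composable C.toLinGlob p m a b) :
    C.comp p m a b = a + b - LinGlob.castL C.toLinGlob
      (by omega : m - (m - p) + (m - p) = m)
      (LinGlobId.oneUp C.toLinGlobId (m - (m - p)) (m - p)
        (LinGlob.tFrom C.toLinGlob m (m - p) a)) := by
  set e := LinGlob.castL C.toLinGlob (by omega : m - (m - p) + (m - p) = m)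
      (LinGlobId.oneUp C.toLinGlobId (m - (m - p)) (m - p)
        (LinGlob.tFrom C.toLinGlob m (m - p) a)) with he
  have hjk : m - (m - p) + (m - p) = m := by omega
  -- s^{m-p} e = t^{m-p} a  and  t^{m-p} e = t^{m-p} a
  have hse : LinGlob.sFrom C.toLinGlob m (m - p) e
      = LinGlob.tFrom C.toLinGlob m (m - p) a := by
    refine eq_of_heq ?_
    refine ((sFrom_congr C.toLinGlob hjk.symm (m - p)
      (castL_heq C.toLinGlob _ _)).trans ?_)
    exact sFrom_oneUp C.toLinGlobId (m - p) (m - (m - p)) (by omega) _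
  have hte : LinGlob.tFrom C.toLinGlob m (m - p) e
      = LinGlob.tFrom C.toLinGlob m (m - p) a := by
    refine eq_of_heq ?_
    refine ((tFrom_congr C.toLinGlob hjk.symm (m - p)
      (castL_heq C.toLinGlob _ _)).trans ?_)
    exact tFrom_oneUp C.toLinGlobId (m - p) (m - (m - p)) (by omega) _
  have hae : LinGlob.Composable C.toLinGlob p m a e := hse.symm
  have hc : LinGlob.Composable C.toLinGlob p m 0 (b - e) := by
    unfold LinGlob.Composable
    rw [tFrom_zero, sFrom_sub, hse, hab, sub_self]
  have key := C.comp_add p m a 0 e (b - e) hae hc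
  rw [add_zero, add_sub_cancel] at key
  have h1 : C.comp p m a e = a := C.comp_id' p m hpm a
  have h2 : C.comp p m 0 (b - e) = b - e := by
    have := C.id_comp' p m hpm (b - e)
    rwa [sFrom_sub, hse, hab, sub_self, oneUp_zero, castL_zero] at this
  rw [key, h1, h2]
  abel


section Fcomm
variable {K : Type} [Field K] {n : ℕ} (A B : LinNCat K n)
  (F : ∀ m, A.L m →ₗ[K] B.L m)

theorem F_sStep (hs : ∀ m a, F m (A.s m a) = B.s m (F (m + 1) a)) (m : ℕ)
    (a : A.L m) : F (m - 1) (LinGlob.sStep A.toLinGlob m a)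
      = LinGlob.sStep B.toLinGlob m (F m a) := by
  cases m with
  | zero => rfl
  | succ m => exact hs m a

theorem F_tStep (ht : ∀ m a, F m (A.t m a) = B.t m (F (m + 1) a)) (m : ℕ)
    (a : A.L m) : F (m - 1) (LinGlob.tStep A.toLinGlob m a)
      = LinGlob.tStep B.toLinGlob m (F m a) := by
  cases m with
  | zero => rfl
  | succ m => exact ht m a

theorem F_sFrom (hs : ∀ m a, F m (A.s m a) = B.s m (F (m + 1) a)) (m k : ℕ)
    (a : A.L m) : F (m - k) (LinGlob.sFrom A.toLinGlob m k a)
      = LinGlob.sFrom B.toLinGlob m k (F m a) := by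
  induction k with
  | zero => rfl
  | succ k ih =>
      show F ((m - k) - 1) (LinGlob.sStep A.toLinGlob (m - k)
          (LinGlob.sFrom A.toLinGlob m k a)) = _
      rw [F_sStep A B F hs (m - k), ih]
      rfl

theorem F_tFrom (ht : ∀ m a, F m (A.t m a) = B.t m (F (m + 1) a)) (m k : ℕ)
    (a : A.L m) : F (m - k) (LinGlob.tFrom A.toLinGlob m k a)
      = LinGlob.tFrom B.toLinGlob m k (F m a) := by
  induction k with
  | zero => rfl
  | succ k ih =>
      show F ((m - k) - 1) (LinGlob.tStep A.toLinGlob (m - k)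
          (LinGlob.tFrom A.toLinGlob m k a)) = _
      rw [F_tStep A B F ht (m - k), ih]
      rfl

theorem F_oneUp (hone : ∀ m a, F (m + 1) (A.one m a) = B.one m (F m a)) (j k : ℕ)
    (x : A.L j) : F (j + k) (LinGlobId.oneUp A.toLinGlobId j k x)
      = LinGlobId.oneUp B.toLinGlobId j k (F j x) := by
  induction k with
  | zero => rfl
  | succ k ih =>
      show F ((j + k) + 1) (A.one (j + k) (LinGlobId.oneUp A.toLinGlobId j k x)) = _
      rw [hone, ih]
      rfl

theorem F_castL {a b : ℕ} (h : a = b) (x : A.L a) :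
    F b (LinGlob.castL A.toLinGlob h x) = LinGlob.castL B.toLinGlob h (F a x) := by
  subst h; rfl

end Fcomm

end Aux
/-- If `F_m : L_m → L'_m` are linear maps between the cells of two
linear n-categories commuting with the source, target and identity maps, then `F`
automatically commutes with all compositions: composable pairs are sent to composable
pairs and `F (v ∘ₚ w) = F v ∘ₚ F w`; hence `F` is a linear n-functor. -/
theorem linear_maps_respecting_glob_structure_are_functors
    (K : Type) [Field K] (n : ℕ) (A B : LinNCat K n)
    (F : ∀ m, A.L m →ₗ[K] B.L m)
    (hs : ∀ m a, F m (A.s m a) = B.s m (F (m + 1) a))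
    (ht : ∀ m a, F m (A.t m a) = B.t m (F (m + 1) a))
    (hone : ∀ m a, F (m + 1) (A.one m a) = B.one m (F m a)) :
    ∀ p m, p < m → ∀ (v w : A.L m), LinGlob.Composable A.toLinGlob p m v w →
      LinGlob.Composable B.toLinGlob p m (F m v) (F m w) ∧
        F m (A.comp p m v w) = B.comp p m (F m v) (F m w) := by
  intro p m hpm v w hvw
  by_cases hmn : m ≤ n
  · have hcmp : LinGlob.Composable B.toLinGlob p m (F m v) (F m w) := by
      unfold LinGlob.Composable at hvw ⊢
      rw [← F_tFrom A B F ht m (m - p) v, ← F_sFrom A B F hs m (m - p) w, hvw]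
    refine ⟨hcmp, ?_⟩
    rw [comp_formula A p m hpm hmn v w hvw, comp_formula B p m hpm hmn _ _ hcmp]
    rw [map_sub, map_add, F_castL A B F, F_oneUp A B F hone, F_tFrom A B F ht]
  · haveI hA := A.trunc m (by omega)
    haveI hB := B.trunc m (by omega)
    constructor
    · unfold LinGlob.Composable
      rw [Subsingleton.elim v 0, Subsingleton.elim w 0, map_zero, sFrom_zero,
        tFrom_zero]
    · exact Subsingleton.elim _ _
end

section
/- Let d : V_1 → V_0 and d' : V'_1 → V'_0 be linear maps between K-vector spaces with V_1 ≠ 0 and V'_1 ≠ 0, let L, L' be the associated linear categories, and let L ⊠ L' be the linear category with cells L_0 ⊗ L'_0 and L_1 ⊗ L'_1, source s ⊗ s', target t ⊗ t', identities 1 ⊗ 1', and composition X ∘ Y = X + Y − (1 ⊗ 1')(t ⊗ t')(X). Then the family of bilinear maps (v, v') ↦ v ⊗ v' does not respect compositions: there exist composable pairs (v,w) in L and (v',w') in L' such that (v ∘ w) ⊗ (v' ∘ w') ≠ (v ⊗ v') ∘ (w ⊗ w'). Hence ⊠ : L × L' → L ⊠ L' is not a bilinear functor. -/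
/- The linear category L associated with a linear map d : V₁ → V₀ has
   L₀ = V₀, L₁ = V₀ × V₁, s(v₀,v₁) = v₀, t(v₀,v₁) = v₀ + d v₁, 1ₓ = (x,0),
   and composition (v₀,v₁) ∘ (v₀ + d v₁, w₁) = (v₀, v₁ + w₁).
   On L ⊠ L' (cells L₀ ⊗ L'₀ and L₁ ⊗ L'₁, source s ⊗ s', target t ⊗ t',
   identities 1 ⊗ 1') the composition is X ∘ Y = X + Y − (1 ⊗ 1')((t ⊗ t')(X)). -/

namespace TwoTerm

open scoped TensorProduct

variable {K : Type} [Field K] {V0 V1 : Type} [AddCommGroup V0] [AddCommGroup V1]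
  [Module K V0] [Module K V1]

/-- Source map `s : L₁ → L₀`. -/
def sMap (K : Type) [Field K] (V0 V1 : Type) [AddCommGroup V0] [AddCommGroup V1]
    [Module K V0] [Module K V1] : (V0 × V1) →ₗ[K] V0 :=
  LinearMap.fst K V0 V1

/-- Target map `t : L₁ → L₀`, `t(v₀,v₁) = v₀ + d v₁`. -/
def tMap (d : V1 →ₗ[K] V0) : (V0 × V1) →ₗ[K] V0 :=
  LinearMap.fst K V0 V1 + d.comp (LinearMap.snd K V0 V1)

/-- Identity map `1 : L₀ → L₁`, `1ₓ = (x,0)`. -/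
def oneMap (K : Type) [Field K] (V0 V1 : Type) [AddCommGroup V0] [AddCommGroup V1]
    [Module K V0] [Module K V1] : V0 →ₗ[K] (V0 × V1) :=
  LinearMap.prod LinearMap.id 0

/-- Composition of composable 1-cells of `L`: `(v₀,v₁) ∘ (v₀ + d v₁, w₁) = (v₀, v₁ + w₁)`. -/
def lcomp (v w : V0 × V1) : V0 × V1 := (v.1, v.2 + w.2)

variable {V'0 V'1 : Type} [AddCommGroup V'0] [AddCommGroup V'1]
  [Module K V'0] [Module K V'1]

/-- Composition on the 1-cells `L₁ ⊗ L'₁` of `L ⊠ L'`: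
`X ∘ Y = X + Y − (1 ⊗ 1')((t ⊗ t')(X))`. -/
noncomputable def bcomp (d : V1 →ₗ[K] V0) (d' : V'1 →ₗ[K] V'0)
    (X Y : (V0 × V1) ⊗[K] (V'0 × V'1)) : (V0 × V1) ⊗[K] (V'0 × V'1) :=
  X + Y -
    TensorProduct.map (oneMap K V0 V1) (oneMap K V'0 V'1)
      (TensorProduct.map (tMap d) (tMap d') X)

end TwoTerm

open TwoTerm
open scoped TensorProduct

/-- If `V₁ ≠ 0` and `V'₁ ≠ 0`, the family of bilinear maps
`(v, v') ↦ v ⊗ v'` does not respect compositions: there exist composable pairs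
`(v,w)` in `L` and `(v',w')` in `L'` with
`(v ∘ w) ⊗ (v' ∘ w') ≠ (v ⊗ v') ∘ (w ⊗ w')`.
Hence `⊠ : L × L' → L ⊠ L'` is not a bilinear functor. -/
theorem boxtimes_not_a_bilinear_functor (K : Type) [Field K]
    (V0 V1 V'0 V'1 : Type) [AddCommGroup V0] [AddCommGroup V1]
    [AddCommGroup V'0] [AddCommGroup V'1]
    [Module K V0] [Module K V1] [Module K V'0] [Module K V'1]
    (d : V1 →ₗ[K] V0) (d' : V'1 →ₗ[K] V'0)
    (h1 : Nontrivial V1) (h1' : Nontrivial V'1) :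
    ∃ (v w : V0 × V1) (v' w' : V'0 × V'1),
      tMap d v = sMap K V0 V1 w ∧ tMap d' v' = sMap K V'0 V'1 w' ∧
      lcomp v w ⊗ₜ[K] lcomp v' w' ≠ bcomp d d' (v ⊗ₜ[K] v') (w ⊗ₜ[K] w') := by
  obtain ⟨y1, hy1⟩ := exists_ne (0 : V1)
  obtain ⟨x1', hx1'⟩ := exists_ne (0 : V'1)
  refine ⟨(0, 0), (0, y1), (0, x1'), (d' x1', 0), ?_, ?_, ?_⟩
  · simp [tMap, sMap]
  · simp [tMap, sMap]
  · have hv : ((0, 0) : V0 × V1) = 0 := rfl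
    rw [hv]
    simp only [bcomp, TensorProduct.zero_tmul, map_zero, zero_add, sub_zero]
    obtain ⟨f, hf⟩ := (not_forall.mp (fun h => hy1 ((Module.forall_dual_apply_eq_zero_iff K y1).mp h)))
    obtain ⟨g, hg⟩ := (not_forall.mp (fun h => hx1' ((Module.forall_dual_apply_eq_zero_iff K x1').mp h)))
    intro heq
    have := congrArg (fun z => TensorProduct.lid K K (TensorProduct.map
      (f ∘ₗ LinearMap.snd K V0 V1) (g ∘ₗ LinearMap.snd K V'0 V'1) z)) heq
    simp [lcomp, TensorProduct.map_tmul, mul_comm] at this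
    exact hf (this.resolve_right hg)
end

section
/- Let B_m : L_m × L_m → L_m (m = 0,1,2) be a family of antisymmetric bilinear maps on the cells of G(V) commuting with the source, target and identity maps. Then B respects all compositions — i.e. B(v ∘_p v', w ∘_p w') = B(v,w) ∘_p B(v',w') for all pairs (v,v'), (w,w') of m-cells composable along a p-cell — if and only if the following hold for all f, g ∈ V_1 and a, b ∈ V_2 (viewed as cells of G(V)): B(f,g) = B(1_{t(f)}, g) = B(f, 1_{t(g)}); B(a,b) = B(1_{t(a)}, b) = B(a, 1_{t(b)}) = 0; and B(1_f, b) = B(1^2_{t(f)}, b) = 0. -/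
/- The linear 2-category G(V) associated with a 3-term chain complex
   V₂ --d₂--> V₁ --d₁--> V₀ (d₁ ∘ d₂ = 0):
   L₀ = V₀, L₁ = V₀ × V₁, L₂ = V₀ × V₁ × V₂,
   s(v₀,…,v_m) = (v₀,…,v_{m-1}), t(v₀,…,v_m) = (v₀,…,v_{m-1} + d v_m),
   1_{(v₀,…,v_m)} = (v₀,…,v_m,0),
   (v₀,…,v_m) ∘_p (w₀,…,w_m) = (v₀,…,v_p, v_{p+1}+w_{p+1}, …, v_m+w_m). -/

namespace GV

variable {K : Type} [Field K] {V0 V1 V2 : Type}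
  [AddCommGroup V0] [AddCommGroup V1] [AddCommGroup V2]
  [Module K V0] [Module K V1] [Module K V2]

variable (d1 : V1 →ₗ[K] V0) (d2 : V2 →ₗ[K] V1)

/-- Source of a 1-cell. -/
def s1 (v : V0 × V1) : V0 := v.1

/-- Target of a 1-cell. -/
def t1 (v : V0 × V1) : V0 := v.1 + d1 v.2

/-- Source of a 2-cell. -/
def s2 (v : V0 × V1 × V2) : V0 × V1 := (v.1, v.2.1)

/-- Target of a 2-cell. -/
def t2 (v : V0 × V1 × V2) : V0 × V1 := (v.1, v.2.1 + d2 v.2.2)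

/-- Identity 1-cell on a 0-cell. -/
def one0 (x : V0) : V0 × V1 := (x, 0)

/-- Identity 2-cell on a 1-cell. -/
def one1 (v : V0 × V1) : V0 × V1 × V2 := (v.1, v.2, 0)

/-- Composition of 1-cells along a 0-cell. -/
def comp01 (v w : V0 × V1) : V0 × V1 := (v.1, v.2 + w.2)

/-- Composition of 2-cells along a 0-cell. -/
def comp02 (v w : V0 × V1 × V2) : V0 × V1 × V2 := (v.1, v.2.1 + w.2.1, v.2.2 + w.2.2)

/-- Composition of 2-cells along a 1-cell. -/
def comp12 (v w : V0 × V1 × V2) : V0 × V1 × V2 := (v.1, v.2.1, v.2.2 + w.2.2)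

/-- Composability of 1-cells along a 0-cell: `t v = s w`. -/
def Comp01 (v w : V0 × V1) : Prop := t1 d1 v = s1 w

/-- Composability of 2-cells along a 0-cell: `t² v = s² w`. -/
def Comp02 (v w : V0 × V1 × V2) : Prop := t1 d1 (t2 d2 v) = s1 (s2 w)

/-- Composability of 2-cells along a 1-cell: `t v = s w`. -/
def Comp12 (v w : V0 × V1 × V2) : Prop := t2 d2 v = s2 w

end GV

open GV

section BiHelpers

variable {M N P : Type*} [AddCommGroup M] [AddCommGroup P]

private lemma biadd_zero_left (B : M → N → P)
    (hl : ∀ a a' b, B (a + a') b = B a b + B a' b) (b : N) : B 0 b = 0 := by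
  have h := hl 0 0 b
  rw [zero_add] at h
  exact (left_eq_add.mp h)

private lemma biadd_sub_left (B : M → N → P)
    (hl : ∀ a a' b, B (a + a') b = B a b + B a' b) (a a' : M) (b : N) :
    B (a - a') b = B a b - B a' b := by
  have h := hl (a - a') a' b
  rw [sub_add_cancel] at h
  exact eq_sub_of_add_eq h.symm

private lemma biadd_zero_right (B : N → M → P)
    (hr : ∀ a b b', B a (b + b') = B a b + B a b') (a : N) : B a 0 = 0 := by
  have h := hr a 0 0
  rw [zero_add] at h
  exact (left_eq_add.mp h)

private lemma biadd_sub_right (B : N → M → P)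
    (hr : ∀ a b b', B a (b + b') = B a b + B a b') (a : N) (b b' : M) :
    B a (b - b') = B a b - B a b' := by
  have h := hr a (b - b') b'
  rw [sub_add_cancel] at h
  exact eq_sub_of_add_eq h.symm

private lemma key_interchange {M : Type*} [AddCommGroup M] (B : M → M → M)
    (hl : ∀ a a' b, B (a + a') b = B a b + B a' b)
    (hr : ∀ a b b', B a (b + b') = B a b + B a b')
    (v v' w w' P Q : M)
    (hkey : B (v - P) (w' - Q) + B (v' - P) (w - Q) = 0) :
    B (v + v' - P) (w + w' - Q) = B v w + B v' w' - B P Q := by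
  have hsl := biadd_sub_left B hl
  have hsr := biadd_sub_right B hr
  rw [← sub_eq_zero]
  have expand : B (v + v' - P) (w + w' - Q) - (B v w + B v' w' - B P Q)
      = B (v - P) (w' - Q) + B (v' - P) (w - Q) := by
    simp only [hsl, hsr, hl, hr]
    abel
  rw [expand]
  exact hkey

end BiHelpers

namespace GV

variable {K : Type} [Field K] {V0 V1 V2 : Type}
  [AddCommGroup V0] [AddCommGroup V1] [AddCommGroup V2]
  [Module K V0] [Module K V1] [Module K V2]

variable (d1 : V1 →ₗ[K] V0) (d2 : V2 →ₗ[K] V1)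

set_option linter.unusedSectionVars false

private lemma comp01_eq_sub (v w : V0 × V1) (h : Comp01 d1 v w) :
    comp01 v w = v + w - one0 (t1 d1 v) := by
  obtain ⟨x, f⟩ := v; obtain ⟨y, g⟩ := w
  have h' : x + d1 f = y := h
  simp only [comp01, one0, t1, Prod.ext_iff, Prod.mk_add_mk, Prod.mk_sub_mk, ← h']
  constructor <;> abel

private lemma comp02_eq_sub (v w : V0 × V1 × V2) (h : Comp02 d1 d2 v w) :
    comp02 v w = v + w - one1 (one0 (t1 d1 (t2 d2 v))) := by
  obtain ⟨x, f, a⟩ := v; obtain ⟨y, g, b⟩ := w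
  have h' : x + d1 (f + d2 a) = y := h
  simp only [comp02, one1, one0, t1, t2, Prod.ext_iff, Prod.mk_add_mk, Prod.mk_sub_mk, ← h']
  refine ⟨by abel, by abel, by abel⟩

private lemma comp12_eq_sub (v w : V0 × V1 × V2) (h : Comp12 d2 v w) :
    comp12 v w = v + w - one1 (t2 d2 v) := by
  obtain ⟨x, f, a⟩ := v; obtain ⟨y, g, b⟩ := w
  obtain ⟨h1, h2⟩ : x = y ∧ f + d2 a = g := Prod.ext_iff.mp h
  simp only [comp12, one1, t2, Prod.ext_iff, Prod.mk_add_mk, Prod.mk_sub_mk, ← h1, ← h2]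
  refine ⟨by abel, by abel, by abel⟩

end GV


/-- Let `B_m : L_m × L_m → L_m` (m = 0,1,2) be antisymmetric bilinear
maps on the cells of `G(V)` commuting with source, target and identity maps.  Then `B`
respects all compositions iff, for all `f, g ∈ V₁` and `a, b ∈ V₂` (viewed as cells):
`B(f,g) = B(1_{t f}, g) = B(f, 1_{t g})`;
`B(a,b) = B(1_{t a}, b) = B(a, 1_{t b}) = 0`;  and
`B(1_f, b) = B(1²_{t f}, b) = 0`. -/
theorem bracket_respects_compositions_iff (K : Type) [Field K]
    (V0 V1 V2 : Type) [AddCommGroup V0] [AddCommGroup V1] [AddCommGroup V2]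
    [Module K V0] [Module K V1] [Module K V2]
    (d1 : V1 →ₗ[K] V0) (d2 : V2 →ₗ[K] V1) (hdd : ∀ a, d1 (d2 a) = 0)
    (B0 : V0 → V0 → V0) (B1 : V0 × V1 → V0 × V1 → V0 × V1)
    (B2 : V0 × V1 × V2 → V0 × V1 × V2 → V0 × V1 × V2)
    -- bilinearity
    (hB0al : ∀ x x' y, B0 (x + x') y = B0 x y + B0 x' y)
    (hB0ar : ∀ x y y', B0 x (y + y') = B0 x y + B0 x y')
    (hB0sl : ∀ (c : K) x y, B0 (c • x) y = c • B0 x y)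
    (hB0sr : ∀ (c : K) x y, B0 x (c • y) = c • B0 x y)
    (hB1al : ∀ v v' w, B1 (v + v') w = B1 v w + B1 v' w)
    (hB1ar : ∀ v w w', B1 v (w + w') = B1 v w + B1 v w')
    (hB1sl : ∀ (c : K) v w, B1 (c • v) w = c • B1 v w)
    (hB1sr : ∀ (c : K) v w, B1 v (c • w) = c • B1 v w)
    (hB2al : ∀ v v' w, B2 (v + v') w = B2 v w + B2 v' w)
    (hB2ar : ∀ v w w', B2 v (w + w') = B2 v w + B2 v w')
    (hB2sl : ∀ (c : K) v w, B2 (c • v) w = c • B2 v w)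
    (hB2sr : ∀ (c : K) v w, B2 v (c • w) = c • B2 v w)
    -- antisymmetry
    (hB0an : ∀ x y, B0 x y = -B0 y x)
    (hB1an : ∀ v w, B1 v w = -B1 w v)
    (hB2an : ∀ v w, B2 v w = -B2 w v)
    -- compatibility with sources, targets and identities
    (hs1 : ∀ v w, s1 (B1 v w) = B0 (s1 v) (s1 w))
    (ht1 : ∀ v w, t1 d1 (B1 v w) = B0 (t1 d1 v) (t1 d1 w))
    (hs2 : ∀ v w, s2 (B2 v w) = B1 (s2 v) (s2 w))
    (ht2 : ∀ v w, t2 d2 (B2 v w) = B1 (t2 d2 v) (t2 d2 w))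
    (hone0 : ∀ x y, B1 (one0 x) (one0 y) = one0 (B0 x y))
    (hone1 : ∀ v w, B2 (one1 v) (one1 w) = one1 (B1 v w)) :
    -- B respects all compositions
    ((∀ v v' w w', Comp01 d1 v v' → Comp01 d1 w w' →
        B1 (comp01 v v') (comp01 w w') = comp01 (B1 v w) (B1 v' w')) ∧
     (∀ v v' w w', Comp02 d1 d2 v v' → Comp02 d1 d2 w w' →
        B2 (comp02 v v') (comp02 w w') = comp02 (B2 v w) (B2 v' w')) ∧
     (∀ v v' w w', Comp12 d2 v v' → Comp12 d2 w w' →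
        B2 (comp12 v v') (comp12 w w') = comp12 (B2 v w) (B2 v' w')))
    ↔
    ((∀ f g : V1, B1 (0, f) (0, g) = B1 (one0 (t1 d1 (0, f))) (0, g) ∧
        B1 (0, f) (0, g) = B1 (0, f) (one0 (t1 d1 (0, g)))) ∧
     (∀ a b : V2, B2 (0, 0, a) (0, 0, b) = B2 (one1 (t2 d2 (0, 0, a))) (0, 0, b) ∧
        B2 (0, 0, a) (0, 0, b) = B2 (0, 0, a) (one1 (t2 d2 (0, 0, b))) ∧
        B2 (0, 0, a) (0, 0, b) = 0) ∧
     (∀ (f : V1) (b : V2), B2 (one1 (0, f)) (0, 0, b) =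
          B2 (one1 (one0 (t1 d1 (0, f)))) (0, 0, b) ∧
        B2 (one1 (0, f)) (0, 0, b) = 0)) := by
  have z0l := biadd_zero_left B0 hB0al
  have z0r := biadd_zero_right B0 hB0ar
  have z1l := biadd_zero_left B1 hB1al
  have z1r := biadd_zero_right B1 hB1ar
  have z2l := biadd_zero_left B2 hB2al
  have z2r := biadd_zero_right B2 hB2ar
  have sb1l := biadd_sub_left B1 hB1al
  have sb1r := biadd_sub_right B1 hB1ar
  have sb2l := biadd_sub_left B2 hB2al
  have sb2r := biadd_sub_right B2 hB2ar
  constructor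
  · rintro ⟨hc01, hc02, hc12⟩
    refine ⟨fun f g => ⟨?g1a, ?g1b⟩, fun a b => ⟨?g2a, ?g2b, ?g2c⟩, fun f b => ⟨?g3a, ?g3b⟩⟩
    case g1a =>
      have hv : Comp01 d1 ((0 : V0), f) (one0 (t1 d1 ((0 : V0), f))) := rfl
      have hw : Comp01 d1 (0 : V0 × V1) ((0 : V0), g) := by simp [Comp01, t1, s1]
      have E := hc01 _ _ _ _ hv hw
      simp only [comp01, one0, t1, s1, z1r, Prod.fst_zero, Prod.snd_zero, add_zero,
        zero_add] at E
      have hfst : (B1 (d1 f, (0 : V1)) ((0 : V0), g)).1 = 0 := by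
        have h := hs1 (d1 f, (0 : V1)) ((0 : V0), g)
        simpa [s1, z0r] using h
      show B1 ((0 : V0), f) ((0 : V0), g) = B1 ((0 : V0) + d1 f, (0 : V1)) ((0 : V0), g)
      simp only [zero_add]
      rw [E]
      exact Prod.ext_iff.mpr ⟨hfst.symm, rfl⟩
    case g1b =>
      have hv : Comp01 d1 (0 : V0 × V1) ((0 : V0), f) := by simp [Comp01, t1, s1]
      have hw : Comp01 d1 ((0 : V0), g) (one0 (t1 d1 ((0 : V0), g))) := rfl
      have E := hc01 _ _ _ _ hv hw
      simp only [comp01, one0, t1, s1, z1l, Prod.fst_zero, Prod.snd_zero, add_zero,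
        zero_add] at E
      have hfst : (B1 ((0 : V0), f) (d1 g, (0 : V1))).1 = 0 := by
        have h := hs1 ((0 : V0), f) (d1 g, (0 : V1))
        simpa [s1, z0l] using h
      show B1 ((0 : V0), f) ((0 : V0), g) = B1 ((0 : V0), f) ((0 : V0) + d1 g, (0 : V1))
      simp only [zero_add]
      rw [E]
      exact Prod.ext_iff.mpr ⟨hfst.symm, rfl⟩
    case g2a =>
      have hv : Comp12 d2 ((0 : V0), (0 : V1), a) (one1 (t2 d2 ((0 : V0), (0 : V1), a))) := rfl
      have hw : Comp12 d2 (0 : V0 × V1 × V2) ((0 : V0), (0 : V1), b) := by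
        simp [Comp12, t2, s2]
      have E := hc12 _ _ _ _ hv hw
      simp only [comp12, one1, t2, s2, z2r, Prod.fst_zero, Prod.snd_zero, add_zero,
        zero_add] at E
      have hf : (B2 ((0 : V0), d2 a, (0 : V2)) ((0 : V0), (0 : V1), b)).1 = 0 ∧
          (B2 ((0 : V0), d2 a, (0 : V2)) ((0 : V0), (0 : V1), b)).2.1 = 0 := by
        have h := hs2 ((0 : V0), d2 a, (0 : V2)) ((0 : V0), (0 : V1), b)
        simpa [s2, Prod.mk_zero_zero, z1r, Prod.ext_iff] using h
      show B2 ((0 : V0), (0 : V1), a) ((0 : V0), (0 : V1), b)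
          = B2 ((0 : V0), (0 : V1) + d2 a, (0 : V2)) ((0 : V0), (0 : V1), b)
      simp only [zero_add]
      rw [E]
      exact Prod.ext_iff.mpr ⟨hf.1.symm, Prod.ext_iff.mpr ⟨hf.2.symm, rfl⟩⟩
    case g2b =>
      have hv : Comp12 d2 (0 : V0 × V1 × V2) ((0 : V0), (0 : V1), a) := by
        simp [Comp12, t2, s2]
      have hw : Comp12 d2 ((0 : V0), (0 : V1), b) (one1 (t2 d2 ((0 : V0), (0 : V1), b))) := rfl
      have E := hc12 _ _ _ _ hv hw
      simp only [comp12, one1, t2, s2, z2l, Prod.fst_zero, Prod.snd_zero, add_zero,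
        zero_add] at E
      have hf : (B2 ((0 : V0), (0 : V1), a) ((0 : V0), d2 b, (0 : V2))).1 = 0 ∧
          (B2 ((0 : V0), (0 : V1), a) ((0 : V0), d2 b, (0 : V2))).2.1 = 0 := by
        have h := hs2 ((0 : V0), (0 : V1), a) ((0 : V0), d2 b, (0 : V2))
        simpa [s2, Prod.mk_zero_zero, z1l, Prod.ext_iff] using h
      show B2 ((0 : V0), (0 : V1), a) ((0 : V0), (0 : V1), b)
          = B2 ((0 : V0), (0 : V1), a) ((0 : V0), (0 : V1) + d2 b, (0 : V2))
      simp only [zero_add]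
      rw [E]
      exact Prod.ext_iff.mpr ⟨hf.1.symm, Prod.ext_iff.mpr ⟨hf.2.symm, rfl⟩⟩
    case g2c =>
      have hv : Comp02 d1 d2 ((0 : V0), (0 : V1), a) (0 : V0 × V1 × V2) := by
        simp [Comp02, t1, t2, s1, s2, hdd]
      have hw : Comp02 d1 d2 (0 : V0 × V1 × V2) ((0 : V0), (0 : V1), b) := by
        simp [Comp02, t1, t2, s1, s2, hdd]
      have E := hc02 _ _ _ _ hv hw
      simpa [comp02, z2l, z2r, Prod.ext_iff] using E
    case g3a =>
      have hv : Comp02 d1 d2 ((0 : V0), f, (0 : V2))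
          (one1 (one0 (t1 d1 (t2 d2 ((0 : V0), f, (0 : V2)))))) := rfl
      have hw : Comp02 d1 d2 (0 : V0 × V1 × V2) ((0 : V0), (0 : V1), b) := by
        simp [Comp02, t1, t2, s1, s2, hdd]
      have E := hc02 _ _ _ _ hv hw
      simp only [comp02, one1, one0, t1, t2, s1, s2, z2r, Prod.fst_zero, Prod.snd_zero,
        add_zero, zero_add, map_zero] at E
      have hf : (B2 (d1 f, (0 : V1), (0 : V2)) ((0 : V0), (0 : V1), b)).1 = 0 ∧
          (B2 (d1 f, (0 : V1), (0 : V2)) ((0 : V0), (0 : V1), b)).2.1 = 0 := by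
        have h := hs2 (d1 f, (0 : V1), (0 : V2)) ((0 : V0), (0 : V1), b)
        simpa [s2, Prod.mk_zero_zero, z1r, Prod.ext_iff] using h
      show B2 ((0 : V0), f, (0 : V2)) ((0 : V0), (0 : V1), b)
          = B2 ((0 : V0) + d1 f, (0 : V1), (0 : V2)) ((0 : V0), (0 : V1), b)
      simp only [zero_add]
      rw [E]
      exact Prod.ext_iff.mpr ⟨hf.1.symm, rfl⟩
    case g3b =>
      have hv : Comp02 d1 d2 (0 : V0 × V1 × V2) ((0 : V0), f, (0 : V2)) := by
        simp [Comp02, t1, t2, s1, s2, hdd]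
      have hw : Comp02 d1 d2 ((0 : V0), (0 : V1), b) (0 : V0 × V1 × V2) := by
        simp [Comp02, t1, t2, s1, s2, hdd]
      have E := hc02 _ _ _ _ hv hw
      show B2 ((0 : V0), f, (0 : V2)) ((0 : V0), (0 : V1), b) = 0
      simpa [comp02, z2l, z2r, Prod.ext_iff] using E
  · rintro ⟨h1, h2, h3⟩
    refine ⟨?c01, ?c02, ?c12⟩
    case c01 =>
      intro v v' w w' hv hw
      have hvB : Comp01 d1 (B1 v w) (B1 v' w') := by
        unfold Comp01 at *
        rw [ht1, hs1, hv, hw]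
      rw [comp01_eq_sub d1 v v' hv, comp01_eq_sub d1 w w' hw, comp01_eq_sub d1 _ _ hvB,
        ht1, ← hone0]
      apply key_interchange B1 hB1al hB1ar
      obtain ⟨x, f⟩ := v; obtain ⟨x', f'⟩ := v'; obtain ⟨y, g⟩ := w; obtain ⟨y', g'⟩ := w'
      have hv' : x + d1 f = x' := hv
      have hw' : y + d1 g = y' := hw
      have e1 : ((x, f) : V0 × V1) - one0 (t1 d1 (x, f))
          = ((0 : V0), f) - one0 (t1 d1 ((0 : V0), f)) := by
        simp only [one0, t1, Prod.mk_sub_mk, Prod.ext_iff]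
        exact ⟨by abel, trivial⟩
      have e2 : ((x', f') : V0 × V1) - one0 (t1 d1 (x, f)) = ((0 : V0), f') := by
        simp only [one0, t1, Prod.mk_sub_mk, Prod.ext_iff, ← hv']
        constructor <;> abel
      have e3 : ((y, g) : V0 × V1) - one0 (t1 d1 (y, g))
          = ((0 : V0), g) - one0 (t1 d1 ((0 : V0), g)) := by
        simp only [one0, t1, Prod.mk_sub_mk, Prod.ext_iff]
        exact ⟨by abel, trivial⟩
      have e4 : ((y', g') : V0 × V1) - one0 (t1 d1 (y, g)) = ((0 : V0), g') := by
        simp only [one0, t1, Prod.mk_sub_mk, Prod.ext_iff, ← hw']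
        constructor <;> abel
      rw [e1, e2, e3, e4, sb1l, sb1r, ← (h1 f g').1, ← (h1 f' g).2]
      simp
    case c02 =>
      intro v v' w w' hv hw
      have hvB : Comp02 d1 d2 (B2 v w) (B2 v' w') := by
        unfold Comp02 at *
        rw [ht2, ht1, hs2, hs1, hv, hw]
      rw [comp02_eq_sub d1 d2 v v' hv, comp02_eq_sub d1 d2 w w' hw, comp02_eq_sub d1 d2 _ _ hvB,
        ht2, ht1, ← hone0, ← hone1]
      apply key_interchange B2 hB2al hB2ar
      obtain ⟨x, f, a⟩ := v; obtain ⟨x', f', a'⟩ := v'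
      obtain ⟨y, g, b⟩ := w; obtain ⟨y', g', b'⟩ := w'
      have hv' : x + d1 (f + d2 a) = x' := hv
      have hw' : y + d1 (g + d2 b) = y' := hw
      have e1 : ((x, f, a) : V0 × V1 × V2) - one1 (one0 (t1 d1 (t2 d2 (x, f, a))))
          = (one1 ((0 : V0), f) - one1 (one0 (t1 d1 ((0 : V0), f))))
            + ((0 : V0), (0 : V1), a) := by
        simp only [one1, one0, t1, t2, Prod.mk_sub_mk, Prod.mk_add_mk, Prod.ext_iff,
          map_add, hdd]
        refine ⟨by abel, by abel, by abel⟩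
      have e2 : ((x', f', a') : V0 × V1 × V2) - one1 (one0 (t1 d1 (t2 d2 (x, f, a))))
          = one1 ((0 : V0), f') + ((0 : V0), (0 : V1), a') := by
        simp only [one1, one0, t1, t2, Prod.mk_sub_mk, Prod.mk_add_mk, Prod.ext_iff, ← hv']
        refine ⟨by abel, by abel, by abel⟩
      have e3 : ((y, g, b) : V0 × V1 × V2) - one1 (one0 (t1 d1 (t2 d2 (y, g, b))))
          = (one1 ((0 : V0), g) - one1 (one0 (t1 d1 ((0 : V0), g))))
            + ((0 : V0), (0 : V1), b) := by
        simp only [one1, one0, t1, t2, Prod.mk_sub_mk, Prod.mk_add_mk, Prod.ext_iff,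
          map_add, hdd]
        refine ⟨by abel, by abel, by abel⟩
      have e4 : ((y', g', b') : V0 × V1 × V2) - one1 (one0 (t1 d1 (t2 d2 (y, g, b))))
          = one1 ((0 : V0), g') + ((0 : V0), (0 : V1), b') := by
        simp only [one1, one0, t1, t2, Prod.mk_sub_mk, Prod.mk_add_mk, Prod.ext_iff, ← hw']
        refine ⟨by abel, by abel, by abel⟩
      have hz1 : B2 (one1 ((0 : V0), f)) ((0 : V0), (0 : V1), b') = 0 := (h3 f b').2
      have hz2 : B2 (one1 (one0 (t1 d1 ((0 : V0), f)))) ((0 : V0), (0 : V1), b') = 0 :=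
        (h3 f b').1.symm.trans (h3 f b').2
      have hz3 : B2 ((0 : V0), (0 : V1), a) (one1 ((0 : V0), g')) = 0 := by
        rw [hB2an, (h3 g' a).2, neg_zero]
      have hz4 : B2 ((0 : V0), (0 : V1), a) ((0 : V0), (0 : V1), b') = 0 := (h2 a b').2.2
      have hz5 : B2 (one1 ((0 : V0), f')) ((0 : V0), (0 : V1), b) = 0 := (h3 f' b).2
      have hz6 : B2 ((0 : V0), (0 : V1), a') (one1 ((0 : V0), g)) = 0 := by
        rw [hB2an, (h3 g a').2, neg_zero]
      have hz7 : B2 ((0 : V0), (0 : V1), a') (one1 (one0 (t1 d1 ((0 : V0), g)))) = 0 := by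
        rw [hB2an, (h3 g a').1.symm.trans (h3 g a').2, neg_zero]
      have hz8 : B2 ((0 : V0), (0 : V1), a') ((0 : V0), (0 : V1), b) = 0 := (h2 a' b).2.2
      rw [e1, e2, e3, e4]
      simp only [hB2al, hB2ar, sb2l, sb2r, hone1, hz1, hz2, hz3, hz4, hz5, hz6, hz7, hz8]
      rw [← (h1 f g').1, ← (h1 f' g).2]
      abel
    case c12 =>
      intro v v' w w' hv hw
      have hvB : Comp12 d2 (B2 v w) (B2 v' w') := by
        unfold Comp12 at *
        rw [ht2, hs2, hv, hw]
      rw [comp12_eq_sub d2 v v' hv, comp12_eq_sub d2 w w' hw, comp12_eq_sub d2 _ _ hvB,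
        ht2, ← hone1]
      apply key_interchange B2 hB2al hB2ar
      obtain ⟨x, f, a⟩ := v; obtain ⟨x', f', a'⟩ := v'
      obtain ⟨y, g, b⟩ := w; obtain ⟨y', g', b'⟩ := w'
      obtain ⟨hv1, hv2⟩ : x = x' ∧ f + d2 a = f' := Prod.ext_iff.mp hv
      obtain ⟨hw1, hw2⟩ : y = y' ∧ g + d2 b = g' := Prod.ext_iff.mp hw
      have e1 : ((x, f, a) : V0 × V1 × V2) - one1 (t2 d2 (x, f, a))
          = ((0 : V0), (0 : V1), a) - one1 (t2 d2 ((0 : V0), (0 : V1), a)) := by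
        simp only [one1, t2, Prod.mk_sub_mk, Prod.ext_iff]
        refine ⟨by abel, by abel, trivial⟩
      have e2 : ((x', f', a') : V0 × V1 × V2) - one1 (t2 d2 (x, f, a))
          = ((0 : V0), (0 : V1), a') := by
        simp only [one1, t2, Prod.mk_sub_mk, Prod.ext_iff, ← hv1, ← hv2]
        refine ⟨by abel, by abel, by abel⟩
      have e3 : ((y, g, b) : V0 × V1 × V2) - one1 (t2 d2 (y, g, b))
          = ((0 : V0), (0 : V1), b) - one1 (t2 d2 ((0 : V0), (0 : V1), b)) := by
        simp only [one1, t2, Prod.mk_sub_mk, Prod.ext_iff]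
        refine ⟨by abel, by abel, trivial⟩
      have e4 : ((y', g', b') : V0 × V1 × V2) - one1 (t2 d2 (y, g, b))
          = ((0 : V0), (0 : V1), b') := by
        simp only [one1, t2, Prod.mk_sub_mk, Prod.ext_iff, ← hw1, ← hw2]
        refine ⟨by abel, by abel, by abel⟩
      rw [e1, e2, e3, e4, sb2l, sb2r, ← (h2 a b').1, ← (h2 a' b).2.1]
      simp
end

section
/- There is a bijective correspondence between antisymmetric bilinear 2-functors [−,−] : G(V) × G(V) → G(V) and graded antisymmetric chain maps ℓ_2 of weight 0 on V vanishing on V_1 × V_1. The correspondence sends ℓ_2 to the bracket defined on 2-cells by [(x,f,a),(y,g,b)] = (ℓ_2(x,y), ℓ_2(x,g) + ℓ_2(f, y + d g), ℓ_2(x,b) + ℓ_2(a,y)) (and by the analogous truncated formulas on 1- and 0-cells); its inverse sends a bracket [−,−] to the map ℓ_2 with ℓ_2(x,y) = [x,y], ℓ_2(x,g) = [1_x, g], ℓ_2(x,b) = [1^2_x, b] and ℓ_2 = 0 on V_1 × V_1, for x,y ∈ V_0, g ∈ V_1, b ∈ V_2. -/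
namespace GV

/-- A graded antisymmetric chain map `ℓ₂` of weight 0 on `V = (V₀,V₁,V₂)` which
vanishes on `V₁ × V₁`. -/
structure Ell2 (K : Type) [Field K] (V0 V1 V2 : Type)
    [AddCommGroup V0] [AddCommGroup V1] [AddCommGroup V2]
    [Module K V0] [Module K V1] [Module K V2]
    (d1 : V1 →ₗ[K] V0) (d2 : V2 →ₗ[K] V1) : Type where
  l00 : V0 → V0 → V0
  l01 : V0 → V1 → V1
  l10 : V1 → V0 → V1
  l02 : V0 → V2 → V2
  l20 : V2 → V0 → V2
  l11 : V1 → V1 → V2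
  bil00 : (∀ x, IsLinearMap K (l00 x)) ∧ (∀ y, IsLinearMap K (fun x => l00 x y))
  bil01 : (∀ x, IsLinearMap K (l01 x)) ∧ (∀ g, IsLinearMap K (fun x => l01 x g))
  bil10 : (∀ f, IsLinearMap K (l10 f)) ∧ (∀ y, IsLinearMap K (fun f => l10 f y))
  bil02 : (∀ x, IsLinearMap K (l02 x)) ∧ (∀ b, IsLinearMap K (fun x => l02 x b))
  bil20 : (∀ a, IsLinearMap K (l20 a)) ∧ (∀ y, IsLinearMap K (fun a => l20 a y))
  bil11 : (∀ f, IsLinearMap K (l11 f)) ∧ (∀ g, IsLinearMap K (fun f => l11 f g))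
  anti00 : ∀ x y, l00 x y = -l00 y x
  anti10 : ∀ f y, l10 f y = -l01 y f
  anti20 : ∀ a y, l20 a y = -l02 y a
  anti11 : ∀ f g, l11 f g = l11 g f
  chain01 : ∀ x g, d1 (l01 x g) = l00 x (d1 g)
  chain10 : ∀ f y, d1 (l10 f y) = l00 (d1 f) y
  chain02 : ∀ x b, d2 (l02 x b) = l01 x (d2 b)
  chain20 : ∀ a y, d2 (l20 a y) = l10 (d2 a) y
  chain11 : ∀ f g, d2 (l11 f g) = l01 (d1 f) g - l10 f (d1 g)
  chain12 : ∀ f b, (0 : V2) = l02 (d1 f) b - l11 f (d2 b)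
  vanish11 : ∀ f g, l11 f g = 0

/-- An antisymmetric bilinear 2-functor `[−,−] : G(V) × G(V) → G(V)`. -/
structure Bracket (K : Type) [Field K] (V0 V1 V2 : Type)
    [AddCommGroup V0] [AddCommGroup V1] [AddCommGroup V2]
    [Module K V0] [Module K V1] [Module K V2]
    (d1 : V1 →ₗ[K] V0) (d2 : V2 →ₗ[K] V1) : Type where
  B0 : V0 → V0 → V0
  B1 : V0 × V1 → V0 × V1 → V0 × V1
  B2 : V0 × V1 × V2 → V0 × V1 × V2 → V0 × V1 × V2
  bil0 : (∀ x, IsLinearMap K (B0 x)) ∧ (∀ y, IsLinearMap K (fun x => B0 x y))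
  bil1 : (∀ v, IsLinearMap K (B1 v)) ∧ (∀ w, IsLinearMap K (fun v => B1 v w))
  bil2 : (∀ v, IsLinearMap K (B2 v)) ∧ (∀ w, IsLinearMap K (fun v => B2 v w))
  anti0 : ∀ x y, B0 x y = -B0 y x
  anti1 : ∀ v w, B1 v w = -B1 w v
  anti2 : ∀ v w, B2 v w = -B2 w v
  maps_s1 : ∀ v w, s1 (B1 v w) = B0 (s1 v) (s1 w)
  maps_t1 : ∀ v w, t1 d1 (B1 v w) = B0 (t1 d1 v) (t1 d1 w)
  maps_s2 : ∀ v w, s2 (B2 v w) = B1 (s2 v) (s2 w)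
  maps_t2 : ∀ v w, t2 d2 (B2 v w) = B1 (t2 d2 v) (t2 d2 w)
  maps_one0 : ∀ x y, B1 (one0 x) (one0 y) = one0 (B0 x y)
  maps_one1 : ∀ v w, B2 (one1 v) (one1 w) = one1 (B1 v w)
  maps_comp01 : ∀ v v' w w', Comp01 d1 v v' → Comp01 d1 w w' →
      B1 (comp01 v v') (comp01 w w') = comp01 (B1 v w) (B1 v' w')
  maps_comp02 : ∀ v v' w w', Comp02 d1 d2 v v' → Comp02 d1 d2 w w' →
      B2 (comp02 v v') (comp02 w w') = comp02 (B2 v w) (B2 v' w')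
  maps_comp12 : ∀ v v' w w', Comp12 d2 v v' → Comp12 d2 w w' →
      B2 (comp12 v v') (comp12 w w') = comp12 (B2 v w) (B2 v' w')

end GV

namespace GV

variable {K : Type} [Field K] {V0 V1 V2 : Type}
  [AddCommGroup V0] [AddCommGroup V1] [AddCommGroup V2]
  [Module K V0] [Module K V1] [Module K V2]
  {d1 : V1 →ₗ[K] V0} {d2 : V2 →ₗ[K] V1}

section BilHelpers

variable {A B C : Type} [AddCommGroup A] [AddCommGroup B] [AddCommGroup C]
  [Module K A] [Module K B] [Module K C]
variable {l : A → B → C}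
  (h : (∀ x, IsLinearMap K (l x)) ∧ (∀ y, IsLinearMap K (fun x => l x y)))

include h

theorem bl_add_right (x : A) (y y' : B) : l x (y + y') = l x y + l x y' :=
  (h.1 x).map_add y y'

theorem bl_add_left (x x' : A) (y : B) : l (x + x') y = l x y + l x' y :=
  (h.2 y).map_add x x'

theorem bl_smul_right (x : A) (c : K) (y : B) : l x (c • y) = c • l x y :=
  (h.1 x).map_smul c y

theorem bl_smul_left (c : K) (x : A) (y : B) : l (c • x) y = c • l x y :=
  (h.2 y).map_smul c x

theorem bl_zero_right (x : A) : l x 0 = 0 := (h.1 x).map_zero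

theorem bl_zero_left (y : B) : l 0 y = 0 := (h.2 y).map_zero

theorem bl_neg_right (x : A) (y : B) : l x (-y) = - l x y := (h.1 x).map_neg y

theorem bl_neg_left (x : A) (y : B) : l (-x) y = - l x y := (h.2 y).map_neg x

end BilHelpers

namespace Ell2

variable (E : Ell2 K V0 V1 V2 d1 d2)

theorem key1 (f g : V1) : E.l01 (d1 f) g = E.l10 f (d1 g) := by
  have h := E.chain11 f g
  rw [E.vanish11, map_zero] at h
  exact sub_eq_zero.mp h.symm

theorem key1' (f g : V1) : E.l01 (d1 g) f = - E.l01 (d1 f) g := by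
  rw [E.key1, E.anti10]

theorem key2 (f : V1) (b : V2) : E.l02 (d1 f) b = 0 := by
  have h := E.chain12 f b
  rw [E.vanish11, sub_zero] at h
  exact h.symm

theorem key3 (a : V2) (g : V1) : E.l20 a (d1 g) = 0 := by
  rw [E.anti20, E.key2, neg_zero]

theorem key4 (hdd : ∀ a, d1 (d2 a) = 0) (a : V2) (g : V1) :
    E.l10 (d2 a) (d1 g) = 0 := by
  rw [← E.key1, hdd, bl_zero_left E.bil01]

end Ell2

/-- The bracket associated with an `ℓ₂`. -/
def toBracket (hdd : ∀ a, d1 (d2 a) = 0) (E : Ell2 K V0 V1 V2 d1 d2) :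
    Bracket K V0 V1 V2 d1 d2 where
  B0 := E.l00
  B1 v w := (E.l00 v.1 w.1, E.l01 v.1 w.2 + E.l10 v.2 (w.1 + d1 w.2))
  B2 v w := (E.l00 v.1 w.1, E.l01 v.1 w.2.1 + E.l10 v.2.1 (w.1 + d1 w.2.1),
             E.l02 v.1 w.2.2 + E.l20 v.2.2 w.1)
  bil0 := E.bil00
  bil1 := by
    constructor
    · intro v
      refine ⟨fun w w' => ?_, fun c w => ?_⟩ <;>
        refine Prod.ext ?_ ?_ <;>
        simp only [Prod.fst_add, Prod.snd_add, Prod.smul_fst, Prod.smul_snd,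
          map_add, map_smul, bl_add_right E.bil00, bl_add_right E.bil01,
          bl_add_right E.bil10, bl_smul_right E.bil00, bl_smul_right E.bil01,
          bl_smul_right E.bil10, smul_add] <;>
        abel
    · intro w
      refine ⟨fun v v' => ?_, fun c v => ?_⟩ <;>
        refine Prod.ext ?_ ?_ <;>
        simp only [Prod.fst_add, Prod.snd_add, Prod.smul_fst, Prod.smul_snd,
          map_add, map_smul, bl_add_left E.bil00, bl_add_left E.bil01,
          bl_add_left E.bil10, bl_smul_left E.bil00, bl_smul_left E.bil01,
          bl_smul_left E.bil10, smul_add] <;>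
        abel
  bil2 := by
    constructor
    · intro v
      refine ⟨fun w w' => ?_, fun c w => ?_⟩ <;>
        refine Prod.ext ?_ (Prod.ext ?_ ?_) <;>
        simp only [Prod.fst_add, Prod.snd_add, Prod.smul_fst, Prod.smul_snd,
          map_add, map_smul, bl_add_right E.bil00, bl_add_right E.bil01,
          bl_add_right E.bil10, bl_add_right E.bil02, bl_add_right E.bil20,
          bl_smul_right E.bil00, bl_smul_right E.bil01, bl_smul_right E.bil10,
          bl_smul_right E.bil02, bl_smul_right E.bil20, smul_add] <;>
        abel
    · intro w
      refine ⟨fun v v' => ?_, fun c v => ?_⟩ <;>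
        refine Prod.ext ?_ (Prod.ext ?_ ?_) <;>
        simp only [Prod.fst_add, Prod.snd_add, Prod.smul_fst, Prod.smul_snd,
          map_add, map_smul, bl_add_left E.bil00, bl_add_left E.bil01,
          bl_add_left E.bil10, bl_add_left E.bil02, bl_add_left E.bil20,
          bl_smul_left E.bil00, bl_smul_left E.bil01, bl_smul_left E.bil10,
          bl_smul_left E.bil02, bl_smul_left E.bil20, smul_add] <;>
        abel
  anti0 := E.anti00
  anti1 := by
    rintro ⟨x, f⟩ ⟨y, g⟩
    refine Prod.ext (E.anti00 x y) ?_
    simp only [Prod.snd_neg, bl_add_right E.bil10, E.anti10]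
    rw [E.key1' g f]
    abel
  anti2 := by
    rintro ⟨x, f, a⟩ ⟨y, g, b⟩
    refine Prod.ext (E.anti00 x y) (Prod.ext ?_ ?_)
    · simp only [Prod.snd_neg, Prod.fst_neg, bl_add_right E.bil10, E.anti10]
      rw [E.key1' g f]
      abel
    · simp only [Prod.snd_neg, E.anti20]
      abel
  maps_s1 := fun v w => rfl
  maps_t1 := by
    rintro ⟨x, f⟩ ⟨y, g⟩
    simp only [t1, map_add, E.chain01, E.chain10, bl_add_right E.bil00,
      bl_add_left E.bil00, bl_add_right E.bil10]
    abel
  maps_s2 := fun v w => rfl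
  maps_t2 := by
    rintro ⟨x, f, a⟩ ⟨y, g, b⟩
    refine Prod.ext rfl ?_
    simp only [t2, map_add, E.chain02, E.chain20, hdd, add_zero,
      bl_add_right E.bil01, bl_add_left E.bil10, bl_add_right E.bil10,
      E.key4 hdd, bl_zero_right E.bil10]
    abel
  maps_one0 := by
    intro x y
    refine Prod.ext rfl ?_
    simp only [one0, bl_zero_right E.bil01, bl_zero_left E.bil10,
      map_zero, add_zero, zero_add]
  maps_one1 := by
    intro v w
    refine Prod.ext rfl (Prod.ext rfl ?_)
    simp only [one1, bl_zero_right E.bil02, bl_zero_left E.bil20, add_zero]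
  maps_comp01 := by
    rintro ⟨x, f⟩ ⟨x', f'⟩ ⟨y, g⟩ ⟨y', g'⟩ hv hw
    simp only [Comp01, t1, s1] at hv hw
    subst hv hw
    refine Prod.ext rfl ?_
    simp only [comp01, map_add, bl_add_right E.bil01, bl_add_left E.bil01,
      bl_add_right E.bil10, bl_add_left E.bil10]
    rw [E.key1]
    abel
  maps_comp02 := by
    rintro ⟨x, f, a⟩ ⟨x', f', a'⟩ ⟨y, g, b⟩ ⟨y', g', b'⟩ hv hw
    simp only [Comp02, t1, t2, s1, s2, map_add, hdd, add_zero] at hv hw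
    subst hv hw
    refine Prod.ext rfl (Prod.ext ?_ ?_)
    · simp only [comp02, map_add, bl_add_right E.bil01, bl_add_left E.bil01,
        bl_add_right E.bil10, bl_add_left E.bil10]
      rw [E.key1]
      abel
    · simp only [comp02, bl_add_right E.bil02, bl_add_left E.bil02,
        bl_add_right E.bil20, bl_add_left E.bil20, E.key2, E.key3,
        add_zero, zero_add]
      abel
  maps_comp12 := by
    rintro ⟨x, f, a⟩ ⟨x', f', a'⟩ ⟨y, g, b⟩ ⟨y', g', b'⟩ hv hw
    simp only [Comp12, t2, s2, Prod.mk.injEq] at hv hw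
    obtain ⟨hv1, hv2⟩ := hv
    obtain ⟨hw1, hw2⟩ := hw
    subst hv1 hv2 hw1 hw2
    refine Prod.ext rfl (Prod.ext rfl ?_)
    simp only [comp12, bl_add_right E.bil02, bl_add_left E.bil20]
    abel

@[simp] theorem toBracket_B0 (hdd : ∀ a, d1 (d2 a) = 0) (E : Ell2 K V0 V1 V2 d1 d2)
    (x y : V0) : (toBracket hdd E).B0 x y = E.l00 x y := rfl

@[simp] theorem toBracket_B1 (hdd : ∀ a, d1 (d2 a) = 0) (E : Ell2 K V0 V1 V2 d1 d2)
    (v w : V0 × V1) : (toBracket hdd E).B1 v w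
      = (E.l00 v.1 w.1, E.l01 v.1 w.2 + E.l10 v.2 (w.1 + d1 w.2)) := rfl

@[simp] theorem toBracket_B2 (hdd : ∀ a, d1 (d2 a) = 0) (E : Ell2 K V0 V1 V2 d1 d2)
    (v w : V0 × V1 × V2) : (toBracket hdd E).B2 v w
      = (E.l00 v.1 w.1, E.l01 v.1 w.2.1 + E.l10 v.2.1 (w.1 + d1 w.2.1),
         E.l02 v.1 w.2.2 + E.l20 v.2.2 w.1) := rfl

end GV

namespace GV

variable {K : Type} [Field K] {V0 V1 V2 : Type}
  [AddCommGroup V0] [AddCommGroup V1] [AddCommGroup V2]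
  [Module K V0] [Module K V1] [Module K V2]
  {d1 : V1 →ₗ[K] V0} {d2 : V2 →ₗ[K] V1}

/-! ### Consequences of the bracket axioms -/

theorem bkey1 (F : Bracket K V0 V1 V2 d1 d2) (f g : V1) :
    F.B1 ((0 : V0), f) (0, g) = F.B1 (d1 f, 0) (0, g) := by
  have h := F.maps_comp01 (0, f) (d1 f, 0) (0, 0) (0, g)
    (by simp [Comp01, t1, s1]) (by simp [Comp01, t1, s1])
  simp only [comp01, add_zero, zero_add, Prod.mk_zero_zero,
    bl_zero_right F.bil1, Prod.fst_zero, Prod.snd_zero] at h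
  have h1 : (F.B1 (d1 f, 0) (0, g)).1 = 0 :=
    (F.maps_s1 _ _).trans (bl_zero_right F.bil0 _)
  exact h.trans (Prod.ext h1.symm rfl)

theorem bkey2 (F : Bracket K V0 V1 V2 d1 d2) (hdd : ∀ a, d1 (d2 a) = 0)
    (a : V2) (g : V1) : F.B2 ((0 : V0), (0 : V1), a) (0, g, 0) = 0 := by
  have h := F.maps_comp02 (0, 0, a) (0, 0, 0) (0, g, 0) (d1 g, -g, 0)
    (by simp [Comp02, t1, t2, s1, s2, hdd]) (by simp [Comp02, t1, t2, s1, s2])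
  simp only [comp02, add_zero, zero_add, add_neg_cancel, Prod.mk_zero_zero,
    bl_zero_right F.bil2, bl_zero_left F.bil2, Prod.fst_zero, Prod.snd_zero,
    Prod.mk.eta] at h
  exact h.symm

theorem bkey3 (F : Bracket K V0 V1 V2 d1 d2) (hdd : ∀ a, d1 (d2 a) = 0)
    (a b : V2) : F.B2 ((0 : V0), (0 : V1), a) (0, 0, b) = 0 := by
  have h := F.maps_comp02 (0, 0, a) (0, 0, 0) (0, 0, b) (0, 0, -b)
    (by simp [Comp02, t1, t2, s1, s2, hdd]) (by simp [Comp02, t1, t2, s1, s2, hdd])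
  simp only [comp02, add_zero, zero_add, add_neg_cancel, Prod.mk_zero_zero,
    bl_zero_right F.bil2, bl_zero_left F.bil2, Prod.fst_zero, Prod.snd_zero,
    Prod.mk.eta] at h
  exact h.symm

theorem bkey4 (F : Bracket K V0 V1 V2 d1 d2) (hdd : ∀ a, d1 (d2 a) = 0)
    (f : V1) (b : V2) : F.B2 ((0 : V0), f, (0 : V2)) (0, 0, b) = 0 := by
  have h := F.maps_comp02 (0, f, 0) (d1 f, -f, 0) (0, 0, b) (0, 0, 0)
    (by simp [Comp02, t1, t2, s1, s2]) (by simp [Comp02, t1, t2, s1, s2, hdd])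
  simp only [comp02, add_zero, zero_add, add_neg_cancel, Prod.mk_zero_zero,
    bl_zero_right F.bil2, bl_zero_left F.bil2, Prod.fst_zero, Prod.snd_zero,
    Prod.mk.eta] at h
  exact h.symm

theorem bkey5 (F : Bracket K V0 V1 V2 d1 d2) (hdd : ∀ a, d1 (d2 a) = 0)
    (f : V1) (b : V2) : (F.B2 (d1 f, (0 : V1), (0 : V2)) (0, 0, b)).2.2 = 0 := by
  have h := F.maps_comp02 (0, f, 0) (d1 f, 0, 0) (0, 0, 0) (0, 0, b)
    (by simp [Comp02, t1, t2, s1, s2]) (by simp [Comp02, t1, t2, s1, s2])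
  simp only [comp02, add_zero, zero_add, Prod.mk_zero_zero,
    bl_zero_right F.bil2, bl_zero_left F.bil2, Prod.fst_zero, Prod.snd_zero,
    bkey4 F hdd] at h
  exact congrArg (fun p => p.2.2) h.symm

theorem b1chain (F : Bracket K V0 V1 V2 d1 d2) (x : V0) (g : V1) :
    d1 ((F.B1 (x, 0) (0, g)).2) = F.B0 x (d1 g) := by
  have hs : (F.B1 (x, (0:V1)) ((0:V0), g)).1 = 0 :=
    (F.maps_s1 _ _).trans (bl_zero_right F.bil0 _)
  have ht := F.maps_t1 (x, 0) (0, g)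
  simp only [t1, map_zero, add_zero, zero_add, hs] at ht
  exact ht

theorem b2chain (F : Bracket K V0 V1 V2 d1 d2) (x : V0) (b : V2) :
    d2 ((F.B2 (x, 0, 0) (0, 0, b)).2.2) = (F.B1 (x, 0) (0, d2 b)).2 := by
  have hs := congrArg Prod.snd (F.maps_s2 (x, 0, 0) (0, 0, b))
  have ht := congrArg Prod.snd (F.maps_t2 (x, 0, 0) (0, 0, b))
  simp only [s2, t2, map_zero, add_zero, zero_add, Prod.mk_zero_zero,
    bl_zero_right F.bil1, Prod.snd_zero] at hs ht
  rw [hs, zero_add] at ht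
  exact ht

/-- Decomposition of `B1` in terms of its restrictions. -/
theorem FB1 (F : Bracket K V0 V1 V2 d1 d2) (v w : V0 × V1) :
    F.B1 v w
      = (F.B0 v.1 w.1,
          (F.B1 (v.1, 0) (0, w.2)).2 - (F.B1 (w.1 + d1 w.2, 0) (0, v.2)).2) := by
  obtain ⟨x, f⟩ := v
  obtain ⟨y, g⟩ := w
  refine Prod.ext (F.maps_s1 _ _) ?_
  have hone : (F.B1 (x, (0:V1)) (y, 0)).2 = 0 := congrArg Prod.snd (F.maps_one0 x y)
  have hsplit : F.B1 (x, f) (y, g)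
      = F.B1 (x, 0) (y, 0) + F.B1 (x, 0) (0, g)
        + F.B1 (0, f) (y, 0) + F.B1 (0, f) (0, g) := by
    rw [show ((x, f) : V0 × V1) = (x, 0) + (0, f) by simp,
        show ((y, g) : V0 × V1) = (y, 0) + (0, g) by simp,
        bl_add_left F.bil1, bl_add_right F.bil1, bl_add_right F.bil1]
    abel
  rw [hsplit, F.anti1 (0, f) (y, 0), F.anti1 (0, f) (0, g), bkey1 F g f,
      show ((y + d1 g, 0) : V0 × V1) = (y, 0) + (d1 g, 0) by simp,
      bl_add_left F.bil1]
  simp only [Prod.snd_add, Prod.snd_neg, hone]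
  abel

/-- Decomposition of `B2` in terms of its restrictions. -/
theorem FB2 (F : Bracket K V0 V1 V2 d1 d2) (hdd : ∀ a, d1 (d2 a) = 0)
    (v w : V0 × V1 × V2) :
    F.B2 v w
      = (F.B0 v.1 w.1,
          (F.B1 (v.1, 0) (0, w.2.1)).2 - (F.B1 (w.1 + d1 w.2.1, 0) (0, v.2.1)).2,
          (F.B2 (v.1, 0, 0) (0, 0, w.2.2)).2.2
            - (F.B2 (w.1, 0, 0) (0, 0, v.2.2)).2.2) := by
  obtain ⟨x, f, a⟩ := v
  obtain ⟨y, g, b⟩ := w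
  have hsplit : F.B2 (x, f, a) (y, g, b)
      = F.B2 (x, 0, 0) (y, 0, 0) + F.B2 (x, 0, 0) (0, g, 0) + F.B2 (x, 0, 0) (0, 0, b)
        + F.B2 (0, f, 0) (y, 0, 0) + F.B2 (0, f, 0) (0, g, 0) + F.B2 (0, f, 0) (0, 0, b)
        + F.B2 (0, 0, a) (y, 0, 0) + F.B2 (0, 0, a) (0, g, 0)
        + F.B2 (0, 0, a) (0, 0, b) := by
    rw [show ((x, f, a) : V0 × V1 × V2) = (x, 0, 0) + (0, f, 0) + (0, 0, a) by simp,
        show ((y, g, b) : V0 × V1 × V2) = (y, 0, 0) + (0, g, 0) + (0, 0, b) by simp]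
    simp only [bl_add_left F.bil2, bl_add_right F.bil2]
    abel
  refine Prod.ext ?_ (Prod.ext ?_ ?_)
  · exact (congrArg Prod.fst (F.maps_s2 (x, f, a) (y, g, b))).trans (F.maps_s1 _ _)
  · have h2 : (F.B2 (x, f, a) (y, g, b)).2.1 = (F.B1 (x, f) (y, g)).2 :=
      congrArg Prod.snd (F.maps_s2 (x, f, a) (y, g, b))
    rw [h2, FB1 F (x, f) (y, g)]
  · have h1 : (F.B2 (x, (0:V1), (0:V2)) (y, 0, 0)).2.2 = 0 :=
      congrArg (fun p => p.2.2) (F.maps_one1 (x, 0) (y, 0))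
    have h2 : (F.B2 (x, (0:V1), (0:V2)) ((0:V0), g, 0)).2.2 = 0 :=
      congrArg (fun p => p.2.2) (F.maps_one1 (x, 0) (0, g))
    have h4 : (F.B2 ((0:V0), f, (0:V2)) (y, 0, 0)).2.2 = 0 :=
      congrArg (fun p => p.2.2) (F.maps_one1 (0, f) (y, 0))
    have h5 : (F.B2 ((0:V0), f, (0:V2)) ((0:V0), g, 0)).2.2 = 0 :=
      congrArg (fun p => p.2.2) (F.maps_one1 (0, f) (0, g))
    have h7 : F.B2 ((0:V0), (0:V1), a) (y, 0, 0) = -F.B2 (y, 0, 0) (0, 0, a) :=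
      F.anti2 _ _
    rw [hsplit]
    simp only [Prod.snd_add, h1, h2, h4, h5, h7, bkey4 F hdd, bkey2 F hdd,
      bkey3 F hdd, Prod.snd_neg, Prod.snd_zero, add_zero, zero_add]
    abel

/-- The `ℓ₂` associated with a bracket. -/
def toEll2 (hdd : ∀ a, d1 (d2 a) = 0) (F : Bracket K V0 V1 V2 d1 d2) :
    Ell2 K V0 V1 V2 d1 d2 where
  l00 := F.B0
  l01 x g := (F.B1 (x, 0) (0, g)).2
  l10 f y := -(F.B1 (y, 0) (0, f)).2
  l02 x b := (F.B2 (x, 0, 0) (0, 0, b)).2.2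
  l20 a y := -(F.B2 (y, 0, 0) (0, 0, a)).2.2
  l11 _ _ := 0
  bil00 := F.bil0
  bil01 := by
    constructor
    · intro x
      refine ⟨fun g g' => ?_, fun c g => ?_⟩
      · rw [show ((0:V0), g + g') = ((0:V0), g) + (0, g') by simp,
            bl_add_right F.bil1, Prod.snd_add]
      · rw [show ((0:V0), c • g) = c • ((0:V0), g) by simp,
            bl_smul_right F.bil1, Prod.smul_snd]
    · intro g
      refine ⟨fun x x' => ?_, fun c x => ?_⟩
      · rw [show ((x + x', (0:V1)) : V0 × V1) = (x, 0) + (x', 0) by simp,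
            bl_add_left F.bil1, Prod.snd_add]
      · rw [show ((c • x, (0:V1)) : V0 × V1) = c • ((x, 0) : V0 × V1) by simp,
            bl_smul_left F.bil1, Prod.smul_snd]
  bil10 := by
    constructor
    · intro f
      refine ⟨fun y y' => ?_, fun c y => ?_⟩
      · rw [show ((y + y', (0:V1)) : V0 × V1) = (y, 0) + (y', 0) by simp,
            bl_add_left F.bil1, Prod.snd_add, neg_add]
      · rw [show ((c • y, (0:V1)) : V0 × V1) = c • ((y, 0) : V0 × V1) by simp,
            bl_smul_left F.bil1, Prod.smul_snd, smul_neg]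
    · intro y
      refine ⟨fun f f' => ?_, fun c f => ?_⟩
      · rw [show ((0:V0), f + f') = ((0:V0), f) + (0, f') by simp,
            bl_add_right F.bil1, Prod.snd_add, neg_add]
      · rw [show ((0:V0), c • f) = c • ((0:V0), f) by simp,
            bl_smul_right F.bil1, Prod.smul_snd, smul_neg]
  bil02 := by
    constructor
    · intro x
      refine ⟨fun b b' => ?_, fun c b => ?_⟩
      · rw [show ((0:V0), (0:V1), b + b') = ((0:V0), (0:V1), b) + (0, 0, b') by simp,
            bl_add_right F.bil2]
        simp only [Prod.snd_add]
      · rw [show ((0:V0), (0:V1), c • b) = c • ((0:V0), (0:V1), b) by simp,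
            bl_smul_right F.bil2]
        simp only [Prod.smul_snd]
    · intro b
      refine ⟨fun x x' => ?_, fun c x => ?_⟩
      · rw [show ((x + x', (0:V1), (0:V2)) : V0 × V1 × V2) = (x, 0, 0) + (x', 0, 0) by simp,
            bl_add_left F.bil2]
        simp only [Prod.snd_add]
      · rw [show ((c • x, (0:V1), (0:V2)) : V0 × V1 × V2) = c • ((x, 0, 0) : V0 × V1 × V2) by simp,
            bl_smul_left F.bil2]
        simp only [Prod.smul_snd]
  bil20 := by
    constructor
    · intro a
      refine ⟨fun y y' => ?_, fun c y => ?_⟩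
      · rw [show ((y + y', (0:V1), (0:V2)) : V0 × V1 × V2) = (y, 0, 0) + (y', 0, 0) by simp,
            bl_add_left F.bil2]
        simp only [Prod.snd_add, neg_add]
      · rw [show ((c • y, (0:V1), (0:V2)) : V0 × V1 × V2) = c • ((y, 0, 0) : V0 × V1 × V2) by simp,
            bl_smul_left F.bil2]
        simp only [Prod.smul_snd, smul_neg]
    · intro y
      refine ⟨fun a a' => ?_, fun c a => ?_⟩
      · rw [show ((0:V0), (0:V1), a + a') = ((0:V0), (0:V1), a) + (0, 0, a') by simp,
            bl_add_right F.bil2]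
        simp only [Prod.snd_add, neg_add]
      · rw [show ((0:V0), (0:V1), c • a) = c • ((0:V0), (0:V1), a) by simp,
            bl_smul_right F.bil2]
        simp only [Prod.smul_snd, smul_neg]
  bil11 := ⟨fun _ => ⟨fun _ _ => by simp, fun _ _ => by simp⟩,
            fun _ => ⟨fun _ _ => by simp, fun _ _ => by simp⟩⟩
  anti00 := F.anti0
  anti10 := fun _ _ => rfl
  anti20 := fun _ _ => rfl
  anti11 := fun _ _ => rfl
  chain01 := fun x g => b1chain F x g
  chain10 := by
    intro f y
    show d1 (-(F.B1 (y, 0) (0, f)).2) = F.B0 (d1 f) y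
    rw [map_neg, b1chain F, F.anti0 y (d1 f), neg_neg]
  chain02 := fun x b => b2chain F x b
  chain20 := by
    intro a y
    show d2 (-(F.B2 (y, 0, 0) (0, 0, a)).2.2) = -(F.B1 (y, 0) (0, d2 a)).2
    rw [map_neg, b2chain F]
  chain11 := by
    intro f g
    show d2 0 = (F.B1 (d1 f, 0) (0, g)).2 - -(F.B1 (d1 g, 0) (0, f)).2
    rw [map_zero, ← bkey1 F f g, ← bkey1 F g f, F.anti1 ((0:V0), f) (0, g)]
    simp
  chain12 := by
    intro f b
    show (0 : V2) = (F.B2 (d1 f, 0, 0) (0, 0, b)).2.2 - 0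
    rw [bkey5 F hdd f b, sub_zero]
  vanish11 := fun _ _ => rfl

@[simp] theorem toEll2_l00 (hdd : ∀ a, d1 (d2 a) = 0) (F : Bracket K V0 V1 V2 d1 d2)
    (x y : V0) : (toEll2 hdd F).l00 x y = F.B0 x y := rfl

@[simp] theorem toEll2_l01 (hdd : ∀ a, d1 (d2 a) = 0) (F : Bracket K V0 V1 V2 d1 d2)
    (x : V0) (g : V1) : (toEll2 hdd F).l01 x g = (F.B1 (x, 0) (0, g)).2 := rfl

@[simp] theorem toEll2_l10 (hdd : ∀ a, d1 (d2 a) = 0) (F : Bracket K V0 V1 V2 d1 d2)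
    (f : V1) (y : V0) : (toEll2 hdd F).l10 f y = -(F.B1 (y, 0) (0, f)).2 := rfl

@[simp] theorem toEll2_l02 (hdd : ∀ a, d1 (d2 a) = 0) (F : Bracket K V0 V1 V2 d1 d2)
    (x : V0) (b : V2) : (toEll2 hdd F).l02 x b = (F.B2 (x, 0, 0) (0, 0, b)).2.2 := rfl

@[simp] theorem toEll2_l20 (hdd : ∀ a, d1 (d2 a) = 0) (F : Bracket K V0 V1 V2 d1 d2)
    (a : V2) (y : V0) : (toEll2 hdd F).l20 a y = -(F.B2 (y, 0, 0) (0, 0, a)).2.2 := rfl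

theorem Ell2.ext2 {E E' : Ell2 K V0 V1 V2 d1 d2} (h00 : E.l00 = E'.l00)
    (h01 : E.l01 = E'.l01) (h10 : E.l10 = E'.l10) (h02 : E.l02 = E'.l02)
    (h20 : E.l20 = E'.l20) (h11 : E.l11 = E'.l11) : E = E' := by
  cases E; cases E'; congr

theorem Bracket.ext2 {F F' : Bracket K V0 V1 V2 d1 d2} (h0 : F.B0 = F'.B0)
    (h1 : F.B1 = F'.B1) (h2 : F.B2 = F'.B2) : F = F' := by
  cases F; cases F'; congr

end GV

open GV

/-- There is a bijective correspondence between antisymmetric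
bilinear 2-functors on `G(V)` and graded antisymmetric weight-0 chain maps `ℓ₂`
vanishing on `V₁ × V₁`; it sends `ℓ₂` to the bracket
`[(x,f,a),(y,g,b)] = (ℓ₂(x,y), ℓ₂(x,g) + ℓ₂(f, y + d g), ℓ₂(x,b) + ℓ₂(a,y))`
(and its truncations), and its inverse sends a bracket `[−,−]` to the chain map with
`ℓ₂(x,y) = [x,y]`, `ℓ₂(x,g) = [1ₓ,g]`, `ℓ₂(x,b) = [1²ₓ,b]` and `ℓ₂ = 0` on `V₁ × V₁`. -/
theorem bracket_ell2_correspondence (K : Type) [Field K]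
    (V0 V1 V2 : Type) [AddCommGroup V0] [AddCommGroup V1] [AddCommGroup V2]
    [Module K V0] [Module K V1] [Module K V2]
    (d1 : V1 →ₗ[K] V0) (d2 : V2 →ₗ[K] V1) (hdd : ∀ a, d1 (d2 a) = 0) :
    ∃ Φ : Ell2 K V0 V1 V2 d1 d2 ≃ Bracket K V0 V1 V2 d1 d2,
      (∀ E : Ell2 K V0 V1 V2 d1 d2,
        (∀ x y, (Φ E).B0 x y = E.l00 x y) ∧
        (∀ x f y g, (Φ E).B1 (x, f) (y, g) =
            (E.l00 x y, E.l01 x g + E.l10 f (y + d1 g))) ∧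
        (∀ x f a y g b, (Φ E).B2 (x, f, a) (y, g, b) =
            (E.l00 x y, E.l01 x g + E.l10 f (y + d1 g), E.l02 x b + E.l20 a y))) ∧
      (∀ F : Bracket K V0 V1 V2 d1 d2,
        (∀ x y, (Φ.symm F).l00 x y = F.B0 x y) ∧
        (∀ x g, (Φ.symm F).l01 x g = (F.B1 (one0 x) (0, g)).2) ∧
        (∀ x b, (Φ.symm F).l02 x b = (F.B2 (one1 (one0 x)) (0, 0, b)).2.2) ∧
        (∀ f g, (Φ.symm F).l11 f g = 0)) := by
  refine ⟨⟨toBracket hdd, toEll2 hdd, ?_, ?_⟩, ?_, ?_⟩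
  · -- left inverse
    intro E
    refine Ell2.ext2 rfl ?_ ?_ ?_ ?_ ?_
    · funext x g
      show ((toBracket hdd E).B1 (x, 0) (0, g)).2 = E.l01 x g
      simp [toBracket_B1, bl_zero_left E.bil10]
    · funext f y
      show -((toBracket hdd E).B1 (y, 0) (0, f)).2 = E.l10 f y
      simp [toBracket_B1, bl_zero_left E.bil10, E.anti10, bl_zero_right E.bil01]
    · funext x b
      show ((toBracket hdd E).B2 (x, 0, 0) (0, 0, b)).2.2 = E.l02 x b
      simp [toBracket_B2, bl_zero_left E.bil20]
    · funext a y
      show -((toBracket hdd E).B2 (y, 0, 0) (0, 0, a)).2.2 = E.l20 a y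
      simp [toBracket_B2, bl_zero_left E.bil20, E.anti20, bl_zero_left E.bil02]
    · funext f g
      exact (E.vanish11 f g).symm
  · -- right inverse
    intro F
    refine Bracket.ext2 rfl ?_ ?_
    · funext v w
      simp only [toBracket_B1, toEll2_l00, toEll2_l01, toEll2_l10, FB1 F v w, sub_eq_add_neg]
    · funext v w
      simp only [toBracket_B2, toEll2_l00, toEll2_l01, toEll2_l10, toEll2_l02, toEll2_l20,
        FB2 F hdd v w, sub_eq_add_neg]
  · intro E
    exact ⟨fun x y => rfl, fun x f y g => rfl, fun x f a y g b => rfl⟩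
  · intro F
    exact ⟨fun x y => rfl, fun x g => rfl, fun x b => rfl, fun f g => rfl⟩
end

section
/- Let ℓ_2 be a graded antisymmetric chain map of weight 0 on V vanishing on V_1 × V_1, with associated bracket [−,−] on G(V), let x, y ∈ V_0, and let J be a trilinear map assigning to each (x,y,z) ∈ V_0^3 a 1-cell J_{xyz} ∈ L_1 with source [[x,y],z]. Then the naturality condition in the third argument — for every 2-cell α = (z,f,a) ∈ L_2, [[1^2_x,1^2_y],α] ∘_0 1_{J_{x,y,t^2(α)}} = 1_{J_{x,y,s^2(α)}} ∘_0 ([[1^2_x,α],1^2_y] + [1^2_x,[1^2_y,α]]) — holds for all x, y if and only if, for all x, y ∈ V_0, f ∈ V_1 and a ∈ V_2: (i) the V_1-components satisfy J^1_{x,y,d f} + [1_{[x,y]}, f] = [[1_x, f], 1_y] + [1_x, [1_y, f]], and (ii) in V_2, [1^2_{[x,y]}, a] = [[1^2_x, a], 1^2_y] + [1^2_x, [1^2_y, a]]. -/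
/- The linear 2-category G(V) associated with a 3-term chain complex
   V₂ --d₂--> V₁ --d₁--> V₀ (d₁ ∘ d₂ = 0):
   L₀ = V₀, L₁ = V₀ × V₁, L₂ = V₀ × V₁ × V₂,
   s(v₀,…,v_m) = (v₀,…,v_{m-1}), t(v₀,…,v_m) = (v₀,…,v_{m-1} + d v_m),
   1_{(v₀,…,v_m)} = (v₀,…,v_m,0),
   (v₀,…,v_m) ∘_p (w₀,…,w_m) = (v₀,…,v_p, v_{p+1}+w_{p+1}, …, v_m+w_m). -/

namespace GV

variable {K : Type} [Field K] {V0 V1 V2 : Type}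
  [AddCommGroup V0] [AddCommGroup V1] [AddCommGroup V2]
  [Module K V0] [Module K V1] [Module K V2]

variable (d1 : V1 →ₗ[K] V0) (d2 : V2 →ₗ[K] V1)

variable {d1} {d2} in
/-- The bracket of 1-cells associated with `ℓ₂`:
`[(x,f),(y,g)] = (ℓ₂(x,y), ℓ₂(x,g) + ℓ₂(f, y + d g))`. -/
def br1 (E : Ell2 K V0 V1 V2 d1 d2) (v w : V0 × V1) : V0 × V1 :=
  (E.l00 v.1 w.1, E.l01 v.1 w.2 + E.l10 v.2 (w.1 + d1 w.2))

variable {d1} {d2} in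
/-- The bracket of 2-cells associated with `ℓ₂`:
`[(x,f,a),(y,g,b)] = (ℓ₂(x,y), ℓ₂(x,g) + ℓ₂(f, y + d g), ℓ₂(x,b) + ℓ₂(a,y))`. -/
def br2 (E : Ell2 K V0 V1 V2 d1 d2) (v w : V0 × V1 × V2) : V0 × V1 × V2 :=
  (E.l00 v.1 w.1, E.l01 v.1 w.2.1 + E.l10 v.2.1 (w.1 + d1 w.2.1),
    E.l02 v.1 w.2.2 + E.l20 v.2.2 w.1)

end GV

open GV

/-- Let `ℓ₂` be a graded antisymmetric weight-0 chain map on `V`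
vanishing on `V₁ × V₁`, with associated bracket `[−,−]` on `G(V)`, and let `J` assign to
`(x,y,z) ∈ V₀³` a 1-cell `J_{xyz}` with source `[[x,y],z]`.  Then the naturality
condition in the third argument holds for all `x, y` iff (i) the `V₁`-components satisfy
`J¹_{x,y,df} + [1_{[x,y]},f] = [[1ₓ,f],1_y] + [1ₓ,[1_y,f]]` and (ii) in `V₂`,
`[1²_{[x,y]},a] = [[1²ₓ,a],1²_y] + [1²ₓ,[1²_y,a]]`. -/
theorem jacobiator_naturality_iff (K : Type) [Field K]
    (V0 V1 V2 : Type) [AddCommGroup V0] [AddCommGroup V1] [AddCommGroup V2]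
    [Module K V0] [Module K V1] [Module K V2]
    (d1 : V1 →ₗ[K] V0) (d2 : V2 →ₗ[K] V1) (hdd : ∀ a, d1 (d2 a) = 0)
    (E : Ell2 K V0 V1 V2 d1 d2)
    (J : V0 → V0 → V0 → V0 × V1)
    (hsrc : ∀ x y z, (J x y z).1 = E.l00 (E.l00 x y) z)
    (htri : (∀ x y, IsLinearMap K (J x y)) ∧
      (∀ x z, IsLinearMap K (fun y => J x y z)) ∧
      (∀ y z, IsLinearMap K (fun x => J x y z))) :
    (∀ (x y z : V0) (f : V1) (a : V2),
        comp02 (br2 E (br2 E (x, 0, 0) (y, 0, 0)) (z, f, a))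
            (one1 (J x y (t1 d1 (t2 d2 (z, f, a))))) =
          comp02 (one1 (J x y z))
            (br2 E (br2 E (x, 0, 0) (z, f, a)) (y, 0, 0) +
              br2 E (x, 0, 0) (br2 E (y, 0, 0) (z, f, a))))
    ↔
    ((∀ (x y : V0) (f : V1),
        (J x y (d1 f)).2 + (br1 E (one0 (E.l00 x y)) (0, f)).2 =
          (br1 E (br1 E (one0 x) (0, f)) (one0 y)).2 +
            (br1 E (one0 x) (br1 E (one0 y) (0, f))).2) ∧
     (∀ (x y : V0) (a : V2),
        (br2 E (one1 (one0 (E.l00 x y))) (0, 0, a)).2.2 =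
          (br2 E (br2 E (x, 0, 0) (0, 0, a)) (y, 0, 0)).2.2 +
            (br2 E (x, 0, 0) (br2 E (y, 0, 0) (0, 0, a))).2.2)) := by
  obtain ⟨hJ3, hJ2, hJ1⟩ := htri
  have z00 : ∀ x : V0, E.l00 x 0 = 0 := fun x => (E.bil00.1 x).map_zero
  have z01 : ∀ x : V0, E.l01 x (0:V1) = 0 := fun x => (E.bil01.1 x).map_zero
  have z10 : ∀ y : V0, E.l10 0 y = 0 := fun y => (E.bil10.2 y).map_zero
  have z02 : ∀ x : V0, E.l02 x (0:V2) = 0 := fun x => (E.bil02.1 x).map_zero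
  have z20 : ∀ y : V0, E.l20 0 y = 0 := fun y => (E.bil20.2 y).map_zero
  have hJ0 : ∀ x y : V0, J x y 0 = 0 := fun x y => (hJ3 x y).map_zero
  have hJadd : ∀ x y z w : V0, J x y (z + w) = J x y z + J x y w :=
    fun x y z w => (hJ3 x y).map_add z w
  constructor
  · intro h
    constructor
    · intro x y f
      have := h x y 0 f 0
      simp [comp02, br2, br1, one1, one0, t1, t2, s1, s2, Prod.ext_iff,
        z00, z01, z10, z02, z20, hJ0, hdd, map_zero] at this ⊢
      rw [add_comm] at this
      exact this
    · intro x y a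
      have := h x y 0 0 a
      simp [comp02, br2, br1, one1, one0, t1, t2, s1, s2, Prod.ext_iff,
        z00, z01, z10, z02, z20, hJ0, hdd, map_zero] at this ⊢
      exact this
  · rintro ⟨h1, h2⟩ x y z f a
    have e1 := h1 x y f
    have e2 := h2 x y a
    simp [comp02, br2, br1, one1, one0, t1, t2, s1, s2, Prod.ext_iff,
      z00, z01, z10, z02, z20, hJ0, hdd, map_add, hJadd] at e1 e2 ⊢
    refine ⟨(hsrc x y z).symm, ?_, e2⟩
    rw [← e1]
    abel
end

section
/- Let ℓ_2 be a graded antisymmetric chain map of weight 0 on V vanishing on V_1 × V_1, with associated bracket [−,−] on G(V). Then the assignment ℓ_3 ↦ J, J_{xyz} = ([[x,y],z], ℓ_3(x,y,z)), is a bijection between: (a) antisymmetric trilinear maps ℓ_3 : V_0^3 → V_1 satisfying, for all x,y,z ∈ V_0, f ∈ V_1, a ∈ V_2, (i) d(ℓ_3(x,y,z)) + ℓ_2(ℓ_2(x,y),z) − ℓ_2(ℓ_2(x,z),y) + ℓ_2(ℓ_2(y,z),x) = 0, (ii) ℓ_2(ℓ_2(x,y),f) − ℓ_2(ℓ_2(x,f),y)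 + ℓ_2(ℓ_2(y,f),x) + ℓ_3(d f, x, y) = 0, and (iii) ℓ_2(ℓ_2(x,y),a) − ℓ_2(ℓ_2(x,a),y) + ℓ_2(ℓ_2(y,a),x) = 0 (these express the L-infinity condition n = 3 for the weight-1 graded antisymmetric extension of ℓ_3 by zero in total degree ≥ 1); and (b) skew-symmetric trilinear natural 2-transformations J : [[−,−],•] ⇒ [[−,•],−] + [−,[−,•]] (Jacobiators). -/
namespace GV

variable {K : Type} [Field K] {V0 V1 V2 : Type}
  [AddCommGroup V0] [AddCommGroup V1] [AddCommGroup V2]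
  [Module K V0] [Module K V1] [Module K V2]
  {d1 : V1 →ₗ[K] V0} {d2 : V2 →ₗ[K] V1}

/-- An antisymmetric trilinear map `ℓ₃ : V₀³ → V₁` satisfying the L∞ condition `n = 3`
(for its weight-1 graded antisymmetric extension by zero in total degree ≥ 1). -/
structure Ell3 (E : Ell2 K V0 V1 V2 d1 d2) : Type where
  l3 : V0 → V0 → V0 → V1
  tri : (∀ x y, IsLinearMap K (l3 x y)) ∧
    (∀ x z, IsLinearMap K (fun y => l3 x y z)) ∧
    (∀ y z, IsLinearMap K (fun x => l3 x y z))
  anti12 : ∀ x y z, l3 x y z = -l3 y x z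
  anti23 : ∀ x y z, l3 x y z = -l3 x z y
  cond1 : ∀ x y z, d1 (l3 x y z) + E.l00 (E.l00 x y) z - E.l00 (E.l00 x z) y +
      E.l00 (E.l00 y z) x = 0
  cond2 : ∀ x y f, E.l01 (E.l00 x y) f - E.l10 (E.l01 x f) y + E.l10 (E.l01 y f) x +
      l3 (d1 f) x y = 0
  cond3 : ∀ x y a, E.l02 (E.l00 x y) a - E.l20 (E.l02 x a) y + E.l20 (E.l02 y a) x = 0

/-- A Jacobiator: a skew-symmetric trilinear natural 2-transformation
`[[−,−],•] ⇒ [[−,•],−] + [−,[−,•]]`. -/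
structure Jacobiator (E : Ell2 K V0 V1 V2 d1 d2) : Type where
  J : V0 → V0 → V0 → V0 × V1
  tri : (∀ x y, IsLinearMap K (J x y)) ∧
    (∀ x z, IsLinearMap K (fun y => J x y z)) ∧
    (∀ y z, IsLinearMap K (fun x => J x y z))
  src : ∀ x y z, (J x y z).1 = E.l00 (E.l00 x y) z
  tgt : ∀ x y z, t1 d1 (J x y z) = E.l00 (E.l00 x z) y + E.l00 x (E.l00 y z)
  anti12 : ∀ x y z, (J x y z).2 = -(J y x z).2
  anti23 : ∀ x y z, (J x y z).2 = -(J x z y).2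
  nat3 : ∀ (x y z : V0) (f : V1) (a : V2),
      comp02 (br2 E (br2 E (x, 0, 0) (y, 0, 0)) (z, f, a))
          (one1 (J x y (t1 d1 (t2 d2 (z, f, a))))) =
        comp02 (one1 (J x y z))
          (br2 E (br2 E (x, 0, 0) (z, f, a)) (y, 0, 0) +
            br2 E (x, 0, 0) (br2 E (y, 0, 0) (z, f, a)))
  nat1 : ∀ (x y z : V0) (f : V1) (a : V2),
      comp02 (br2 E (br2 E (x, f, a) (y, 0, 0)) (z, 0, 0))
          (one1 (J (t1 d1 (t2 d2 (x, f, a))) y z)) =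
        comp02 (one1 (J x y z))
          (br2 E (br2 E (x, f, a) (z, 0, 0)) (y, 0, 0) +
            br2 E (x, f, a) (br2 E (y, 0, 0) (z, 0, 0)))
  nat2 : ∀ (x y z : V0) (f : V1) (a : V2),
      comp02 (br2 E (br2 E (x, 0, 0) (y, f, a)) (z, 0, 0))
          (one1 (J x (t1 d1 (t2 d2 (y, f, a))) z)) =
        comp02 (one1 (J x y z))
          (br2 E (br2 E (x, 0, 0) (z, 0, 0)) (y, f, a) +
            br2 E (x, 0, 0) (br2 E (y, f, a) (z, 0, 0)))

end GV

namespace GV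

variable {K : Type} [Field K] {V0 V1 V2 : Type}
  [AddCommGroup V0] [AddCommGroup V1] [AddCommGroup V2]
  [Module K V0] [Module K V1] [Module K V2]
  {d1 : V1 →ₗ[K] V0} {d2 : V2 →ₗ[K] V1}

section Helpers
variable {M N P : Type} [AddCommGroup M] [AddCommGroup N] [AddCommGroup P]
  [Module K M] [Module K N] [Module K P]

lemma ilm_prod {A : M → N} {B : M → P} (hA : IsLinearMap K A) (hB : IsLinearMap K B) :
    IsLinearMap K (fun z => (A z, B z)) :=
  ((IsLinearMap.mk' A hA).prod (IsLinearMap.mk' B hB)).isLinear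

lemma ilm_comp {A : M → N} {B : N → P} (hA : IsLinearMap K A) (hB : IsLinearMap K B) :
    IsLinearMap K (fun z => B (A z)) :=
  ((IsLinearMap.mk' B hB).comp (IsLinearMap.mk' A hA)).isLinear

lemma ilm_snd {A : M → N × P} (hA : IsLinearMap K A) :
    IsLinearMap K (fun z => (A z).2) :=
  ((LinearMap.snd K N P).comp (IsLinearMap.mk' A hA)).isLinear

end Helpers

variable (E : Ell2 K V0 V1 V2 d1 d2)

lemma l01_zr (x : V0) : E.l01 x 0 = 0 := (E.bil01.1 x).map_zero
lemma l10_zl (y : V0) : E.l10 (0 : V1) y = 0 := (E.bil10.2 y).map_zero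
lemma l02_zr (x : V0) : E.l02 x 0 = 0 := (E.bil02.1 x).map_zero
lemma l20_zl (y : V0) : E.l20 (0 : V2) y = 0 := (E.bil20.2 y).map_zero

lemma l01_nr (x : V0) (f : V1) : E.l01 x (-f) = -E.l01 x f := (E.bil01.1 x).map_neg f
lemma l10_nl (f : V1) (y : V0) : E.l10 (-f) y = -E.l10 f y := (E.bil10.2 y).map_neg f
lemma l02_nr (x : V0) (b : V2) : E.l02 x (-b) = -E.l02 x b := (E.bil02.1 x).map_neg b
lemma l20_nl (a : V2) (y : V0) : E.l20 (-a) y = -E.l20 a y := (E.bil20.2 y).map_neg a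

lemma br2_id_id (x y : V0) :
    br2 E ((x,0,0) : V0 × V1 × V2) (y,0,0) = (E.l00 x y, 0, 0) := by
  simp [br2, l01_zr, l10_zl, l02_zr, l20_zl]

lemma br2_id_gen (x y : V0) (f : V1) (a : V2) :
    br2 E ((x,0,0) : V0 × V1 × V2) (y,f,a) = (E.l00 x y, E.l01 x f, E.l02 x a) := by
  simp [br2, l10_zl, l20_zl]

lemma br2_gen_id (x y : V0) (f : V1) (a : V2) :
    br2 E ((x,f,a) : V0 × V1 × V2) (y,0,0) = (E.l00 x y, E.l10 f y, E.l20 a y) := by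
  simp [br2, l01_zr, l02_zr]

variable {E} in
/-- The Jacobiator associated with an `ℓ₃`. -/
def Ell3.toJac (hdd : ∀ a : V2, d1 (d2 a) = 0) (T : Ell3 E) : Jacobiator E where
  J x y z := (E.l00 (E.l00 x y) z, T.l3 x y z)
  tri := by
    refine ⟨fun x y => ilm_prod (E.bil00.1 (E.l00 x y)) (T.tri.1 x y),
      fun x z => ilm_prod (ilm_comp (E.bil00.1 x) (E.bil00.2 z)) (T.tri.2.1 x z),
      fun y z => ilm_prod (ilm_comp (E.bil00.2 y) (E.bil00.2 z)) (T.tri.2.2 y z)⟩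
  src := fun _ _ _ => rfl
  anti12 := fun x y z => T.anti12 x y z
  anti23 := fun x y z => T.anti23 x y z
  tgt := by
    intro x y z
    have h := T.cond1 x y z
    rw [E.anti00 x (E.l00 y z)]
    show E.l00 (E.l00 x y) z + d1 (T.l3 x y z) = _
    rw [← sub_eq_zero]
    convert h using 1
    abel
  nat3 := by
    intro x y z f a
    have h := T.cond2 x y f
    have h3 := T.cond3 x y a
    rw [show T.l3 (d1 f) x y = T.l3 x y (d1 f) from by
      rw [T.anti12, T.anti23, neg_neg]] at h
    simp only [t1, t2, s1, s2, map_add, hdd, add_zero, map_zero,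
      l01_zr, l10_zl, l02_zr, l20_zl,
      br2_id_id, br2_id_gen, br2_gen_id, comp02, one1, Prod.mk_add_mk,
      (T.tri.1 x y).map_add, Prod.mk.injEq, true_and, zero_add]
    rw [E.anti10 (E.l01 y f) x] at h
    rw [E.anti20 (E.l02 y a) x] at h3
    constructor
    · rw [← sub_eq_zero]; convert h using 1; abel
    · rw [← sub_eq_zero]; convert h3 using 1; abel
  nat1 := by
    intro x y z f a
    have h := T.cond2 y z f
    have h3 := T.cond3 y z a
    simp only [t1, t2, s1, s2, map_add, hdd, add_zero, map_zero,
      l01_zr, l10_zl, l02_zr, l20_zl,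
      br2_id_id, br2_id_gen, br2_gen_id, comp02, one1, Prod.mk_add_mk,
      Prod.mk.injEq, true_and, zero_add]
    rw [show T.l3 (x + d1 f) y z = T.l3 x y z + T.l3 (d1 f) y z from
      (T.tri.2.2 y z).map_add x (d1 f)]
    rw [E.anti10 f y, E.anti10 f z, E.anti10 f (E.l00 y z),
      E.anti20 a y, E.anti20 a z, E.anti20 a (E.l00 y z),
      l10_nl, l10_nl, l20_nl, l20_nl]
    constructor
    · rw [← sub_eq_zero]; convert h using 1; abel
    · rw [← sub_eq_zero]; convert h3 using 1; abel
  nat2 := by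
    intro x y z f a
    have h := T.cond2 x z f
    have h3 := T.cond3 x z a
    rw [show T.l3 (d1 f) x z = -T.l3 x (d1 f) z from T.anti12 (d1 f) x z] at h
    simp only [t1, t2, s1, s2, map_add, hdd, add_zero, map_zero,
      l01_zr, l10_zl, l02_zr, l20_zl,
      br2_id_id, br2_id_gen, br2_gen_id, comp02, one1, Prod.mk_add_mk,
      Prod.mk.injEq, true_and, zero_add]
    rw [show T.l3 x (y + d1 f) z = T.l3 x y z + T.l3 x (d1 f) z from
      (T.tri.2.1 x z).map_add y (d1 f)]
    rw [E.anti10 f z, E.anti20 a z, l01_nr, l02_nr]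
    rw [E.anti10 (E.l01 z f) x] at h
    rw [E.anti20 (E.l02 z a) x] at h3
    constructor
    · rw [← sub_eq_zero, ← neg_eq_zero]; convert h using 1; abel
    · rw [← sub_eq_zero, ← neg_eq_zero]; convert h3 using 1; abel

lemma l00_zr (x : V0) : E.l00 x 0 = 0 := (E.bil00.1 x).map_zero
lemma l00_zl (y : V0) : E.l00 (0 : V0) y = 0 := (E.bil00.2 y).map_zero

variable {E} in
/-- The `ℓ₃` associated with a Jacobiator. -/
def Jacobiator.toEll3 (hdd : ∀ a : V2, d1 (d2 a) = 0) (Jc : Jacobiator E) : Ell3 E where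
  l3 x y z := (Jc.J x y z).2
  tri := ⟨fun x y => ilm_snd (Jc.tri.1 x y), fun x z => ilm_snd (Jc.tri.2.1 x z),
    fun y z => ilm_snd (Jc.tri.2.2 y z)⟩
  anti12 := Jc.anti12
  anti23 := Jc.anti23
  cond1 := by
    intro x y z
    have h := Jc.tgt x y z
    rw [t1, Jc.src, E.anti00 x (E.l00 y z), ← sub_eq_zero] at h
    convert h using 1
    abel
  cond2 := by
    intro x y f
    have h := Jc.nat3 x y 0 f 0
    simp only [t1, t2, s1, s2, map_add, hdd, add_zero, map_zero, zero_add,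
      l00_zr, l00_zl, l01_zr, l10_zl, l02_zr, l20_zl,
      br2_id_id, br2_id_gen, br2_gen_id, comp02, one1, Prod.mk_add_mk,
      (Jc.tri.1 x y).map_zero, Prod.snd_zero, Prod.fst_zero,
      Prod.mk.injEq, true_and, and_true] at h
    rw [← sub_eq_zero] at h
    beta_reduce
    rw [Jc.anti12 (d1 f) x y, Jc.anti23 x (d1 f) y, neg_neg,
      E.anti10 (E.l01 y f) x]
    convert h using 1
    abel
  cond3 := by
    intro x y a
    have h := Jc.nat3 x y 0 0 a
    simp only [t1, t2, s1, s2, map_add, hdd, add_zero, map_zero, zero_add,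
      l00_zr, l00_zl, l01_zr, l10_zl, l02_zr, l20_zl,
      br2_id_id, br2_id_gen, br2_gen_id, comp02, one1, Prod.mk_add_mk,
      (Jc.tri.1 x y).map_zero, Prod.snd_zero, Prod.fst_zero,
      Prod.mk.injEq, true_and, and_true] at h
    rw [← sub_eq_zero] at h
    rw [E.anti20 (E.l02 y a) x]
    convert h using 1
    abel

variable {E} in
theorem jac_ext {A B : Jacobiator E} (h : A.J = B.J) : A = B := by
  cases A; cases B; cases h; rfl

end GV

open GV

/-- The assignment `ℓ₃ ↦ J`, `J_{xyz} = ([[x,y],z], ℓ₃(x,y,z))`, is a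
bijection between antisymmetric trilinear maps `ℓ₃ : V₀³ → V₁` satisfying the L∞
condition `n = 3` (with vanishing in total degree ≥ 1) and skew-symmetric trilinear
natural 2-transformations `J : [[−,−],•] ⇒ [[−,•],−] + [−,[−,•]]` (Jacobiators). -/
theorem jacobiator_ell3_correspondence (K : Type) [Field K]
    (V0 V1 V2 : Type) [AddCommGroup V0] [AddCommGroup V1] [AddCommGroup V2]
    [Module K V0] [Module K V1] [Module K V2]
    (d1 : V1 →ₗ[K] V0) (d2 : V2 →ₗ[K] V1) (hdd : ∀ a, d1 (d2 a) = 0)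
    (E : Ell2 K V0 V1 V2 d1 d2) :
    ∃ Φ : Ell3 E ≃ Jacobiator E,
      ∀ (T : Ell3 E) (x y z : V0),
        (Φ T).J x y z = (E.l00 (E.l00 x y) z, T.l3 x y z) := by
  refine ⟨{ toFun := fun T => T.toJac hdd,
            invFun := fun Jc => Jc.toEll3 hdd,
            left_inv := fun T => rfl,
            right_inv := fun Jc => ?_ }, fun T x y z => rfl⟩
  apply jac_ext
  funext x y z
  show (E.l00 (E.l00 x y) z, (Jc.J x y z).2) = Jc.J x y z
  rw [← Jc.src x y z]
end
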